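/- arXiv:0811.3475 — 2 statements merged into one kernel-verified Lean document; each statement's English description precedes it below -/
import Mathlib

section
/- In a finite directed multigraph, for any distinct vertices s and t, the maximum number of pairwise internally-disjoint s-to-t paths is at most the maximum number of pairwise edge-disjoint s-to-t paths, which equals the minimum size of an s,t-edge cut. -/
/-- A directed multigraph on vertex type `V` with edge type `E`. -/
structure Multigraph (V E : Type) where
  tail : E → V
  head : E → V

namespace Multigraph

variable {V E : Type}

/-- A (directed) walk from `s` to `t`: a nonempty list of edges, consecutive
edges compatible, starting at `s` and ending at `t`. -/
structure Walk (G : Multigraph V E) (s t : V) where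
  edges : List E
  ne : edges ≠ []
  first : G.tail (edges.head ne) = s
  last : G.head (edges.getLast ne) = t
  chain : edges.Chain' fun e f => G.head e = G.tail f

namespace Walk

variable {G : Multigraph V E} {s t : V}

/-- The internal vertices of a walk: heads of all edges except the last. -/
def internals (w : G.Walk s t) : Set V :=
  {v | ∃ e ∈ w.edges.dropLast, G.head e = v}

/-- All vertices visited by a walk. -/
def vertexSet (w : G.Walk s t) : Set V :=
  {v | v = s ∨ ∃ e ∈ w.edges, G.head e = v}

/-- The set of edges used by a walk. -/
def edgeSet (w : G.Walk s t) : Set E := {e | e ∈ w.edges}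

/-- A walk is simple (a path) if it visits no vertex twice. -/
def IsSimple (w : G.Walk s t) : Prop := (s :: w.edges.map G.head).Nodup

end Walk

/-- There exist `n` pairwise internally-disjoint paths from `s` to `t`
(in a multigraph, parallel direct edges count as distinct internally-disjoint
paths, so pairwise edge-disjointness is also required). -/
def HasIntDisjoint (G : Multigraph V E) (s t : V) (n : ℕ) : Prop :=
  ∃ P : Fin n → G.Walk s t, ∀ i j, i ≠ j →
    (P i).internals ∩ (P j).internals = ∅ ∧ (P i).edgeSet ∩ (P j).edgeSet = ∅

/-- There exist `n` pairwise edge-disjoint walks from `s` to `t`. -/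
def HasEdgeDisjoint (G : Multigraph V E) (s t : V) (n : ℕ) : Prop :=
  ∃ P : Fin n → G.Walk s t, ∀ i j, i ≠ j →
    (P i).edgeSet ∩ (P j).edgeSet = ∅

/-- `A ⊆ V \ {s,t}` is an `s,t`-vertex cut: removing `A` destroys all
walks from `s` to `t`, i.e. every walk from `s` to `t` meets `A`. -/
def IsVertexCut (G : Multigraph V E) (s t : V) (A : Set V) : Prop :=
  s ∉ A ∧ t ∉ A ∧ ∀ w : G.Walk s t, ∃ v ∈ w.vertexSet, v ∈ A

/-- There is no edge from `s` to `t`. -/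
def Nonadjacent (G : Multigraph V E) (s t : V) : Prop :=
  ∀ e : E, ¬(G.tail e = s ∧ G.head e = t)

/-- The edge cut `[S, S̄]`: all edges with tail in `S` and head outside `S`. -/
def cutE (G : Multigraph V E) [Fintype E] [DecidableEq V] (S : Finset V) : Finset E :=
  Finset.univ.filter fun e => G.tail e ∈ S ∧ G.head e ∉ S

/-- `tail([S, S̄])`: the set of tails of the edges in the cut `[S, S̄]`. -/
def tailSet (G : Multigraph V E) [Fintype E] [DecidableEq V] (S : Finset V) : Finset V :=
  (G.cutE S).image G.tail

/-- The parents of a vertex `v`. -/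
def parents (G : Multigraph V E) (v : V) : Set V :=
  {u | ∃ e : E, G.tail e = u ∧ G.head e = v}

/-- The in-degree of a vertex: number of edges entering it. -/
def indeg (G : Multigraph V E) [Fintype E] [DecidableEq V] (t : V) : ℕ :=
  (Finset.univ.filter fun e => G.head e = t).card

/-- The diversity `d(v) = |Γ⁻(v) \ {s}| + |[s,v]|` of a vertex `v`
with respect to the source `s`. -/
def diversity (G : Multigraph V E) [Fintype V] [Fintype E] [DecidableEq V]
    (s v : V) : ℕ :=
  (Finset.univ.filter fun u => u ≠ s ∧ ∃ e : E, G.tail e = u ∧ G.head e = v).card +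
  (Finset.univ.filter fun e : E => G.tail e = s ∧ G.head e = v).card

/-- A multigraph is acyclic if it has no closed walk. -/
def Acyclic (G : Multigraph V E) : Prop := ∀ v : V, IsEmpty (G.Walk v v)

/-- The broadcast transformation with source `s`: every vertex `u ≠ s` is
split into `u → u⁺`, all edges into `u` are kept, and every edge out of
`u` is redirected to originate from `u⁺` (edges out of `s` are unchanged). -/
def broadcast (G : Multigraph V E) (s : V) [DecidableEq V] :
    Multigraph (V ⊕ {u : V // u ≠ s}) (E ⊕ {u : V // u ≠ s}) where
  tail := fun x => match x with
    | Sum.inl e => if h : G.tail e = s then Sum.inl s else Sum.inr ⟨G.tail e, h⟩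
    | Sum.inr u => Sum.inl u.1
  head := fun x => match x with
    | Sum.inl e => Sum.inl (G.head e)
    | Sum.inr u => Sum.inr u

/-- `hw` is the walk in the broadcast transformation corresponding to `w`:
the original edges appearing along `hw`, in order, are exactly those of `w`. -/
def Corresponds [DecidableEq V] {G : Multigraph V E} {s t : V} (w : G.Walk s t)
    (hw : (G.broadcast s).Walk (Sum.inl s) (Sum.inl t)) : Prop :=
  hw.edges.filterMap (Sum.elim some (fun _ => none)) = w.edges

/-- `v` is reachable from `s` by a walk avoiding the vertex set `A`
(in the graph `G − A`). -/
def ReachAvoid (G : Multigraph V E) (A : Set V) (s v : V) : Prop :=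
  v = s ∨ ∃ w : G.Walk s v, ∀ x ∈ w.vertexSet, x ∉ A

end Multigraph

namespace Multigraph

open scoped Classical

variable {V E : Type}

lemma countP_one_unique {α : Type} {p : α → Bool} {l : List α} (hl : l.Nodup)
    (h1 : l.countP p = 1) {e e' : α} (he : e ∈ l) (hpe : p e) (he' : e' ∈ l)
    (hpe' : p e') : e = e' := by
  classical
  by_contra hne
  have h2 : 2 ≤ l.countP p := by
    rw [List.countP_eq_length_filter]
    have hsub : ({e, e'} : Finset α) ⊆ (l.filter p).toFinset := by
      intro x hx
      rcases Finset.mem_insert.1 hx with rfl | hx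
      · exact List.mem_toFinset.2 (List.mem_filter.2 ⟨he, hpe⟩)
      · rw [Finset.mem_singleton.1 hx]
        exact List.mem_toFinset.2 (List.mem_filter.2 ⟨he', hpe'⟩)
    calc 2 = ({e, e'} : Finset α).card := (Finset.card_pair hne).symm
      _ ≤ (l.filter p).toFinset.card := Finset.card_le_card hsub
      _ = (l.filter p).length := List.toFinset_card_of_nodup (hl.filter p)
  omega

lemma countP_sum_split {α : Type} (l : List (α ⊕ α)) (p : α ⊕ α → Bool) :
    l.countP p = ((l.filterMap (Sum.elim some fun _ => none)).countP fun e => p (Sum.inl e))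
      + ((l.filterMap (Sum.elim (fun _ => none) some)).countP fun e => p (Sum.inr e)) := by
  induction l with
  | nil => simp
  | cons x l ih =>
    cases x with
    | inl e => simp [List.countP_cons, List.filterMap_cons, ih]; omega
    | inr e => simp [List.countP_cons, List.filterMap_cons, ih]; omega


/-- Inductive predicate: `l` is the edge list of a walk from `a` to `b`. -/
inductive W (G : Multigraph V E) : V → List E → V → Prop
  | nil (v) : W G v [] v
  | cons {e : E} {l : List E} {u v : V} (h1 : G.tail e = u)
      (h2 : W G (G.head e) l v) : W G u (e :: l) v

namespace W

variable {G : Multigraph V E}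

lemma append : ∀ {a : V} {l₁ : List E} {b : V} {l₂ : List E} {c : V},
    W G a l₁ b → W G b l₂ c → W G a (l₁ ++ l₂) c := by
  intro a l₁ b l₂ c h1 h2
  induction h1 with
  | nil => exact h2
  | cons h1 _ ih => exact .cons h1 (ih h2)

lemma first {a : V} {l : List E} {b : V} (h : W G a l b) (hne : l ≠ []) :
    G.tail (l.head hne) = a := by
  cases h with
  | nil => exact absurd rfl hne
  | cons h1 h2 => exact h1

lemma last : ∀ {a : V} {l : List E} {b : V} (h : W G a l b) (hne : l ≠ []),
    G.head (l.getLast hne) = b := by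
  intro a l b h
  induction h with
  | nil => intro hne; exact absurd rfl hne
  | @cons e l u v h1 h2 ih =>
    intro hne
    cases l with
    | nil => cases h2; simp
    | cons f l' => rw [List.getLast_cons (by simp)]; exact ih (by simp)

lemma chain' : ∀ {a : V} {l : List E} {b : V}, W G a l b →
    l.Chain' fun e f => G.head e = G.tail f := by
  intro a l b h
  induction h with
  | nil => exact List.isChain_nil
  | @cons e l u v h1 h2 ih =>
    cases h2 with
    | nil => exact List.isChain_singleton _
    | @cons f l' _ _ h1' h2' =>
      exact List.isChain_cons_cons.2 ⟨h1'.symm, ih⟩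

lemma endpoint_eq {a : V} {b : V} (h : W G a [] b) : a = b := by cases h; rfl

end W

variable {G : Multigraph V E}

lemma W_of_parts : ∀ (l : List E) (hne : l ≠ []) (a b : V),
    G.tail (l.head hne) = a → G.head (l.getLast hne) = b →
    (l.Chain' fun e f => G.head e = G.tail f) → W G a l b := by
  intro l
  induction l with
  | nil => intro hne; exact absurd rfl hne
  | cons e l ih =>
    intro _ a b hfirst hlast hchain
    cases l with
    | nil =>
      simp at hfirst hlast
      exact hfirst ▸ (W.cons rfl (hlast ▸ W.nil _))
    | cons f l' =>
      simp only [List.Chain', List.isChain_cons_cons] at hchain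
      refine hfirst ▸ W.cons rfl ?_
      rw [List.getLast_cons (by simp)] at hlast
      exact hchain.1 ▸ ih (by simp) _ _ rfl hlast hchain.2

/-- Convert a `Walk` to a `W`. -/
lemma toW {s t : V} (w : G.Walk s t) : W G s w.edges t :=
  W_of_parts w.edges w.ne s t w.first w.last w.chain

/-- Build a `Walk` from a `W` with a nonempty edge list. -/
def mkWalk {s t : V} {l : List E} (h : W G s l t) (hne : l ≠ []) : G.Walk s t :=
  ⟨l, hne, h.first hne, h.last hne, h.chain'⟩

@[simp] lemma mkWalk_edges {s t : V} {l : List E} (h : W G s l t) (hne : l ≠ []) :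
    (mkWalk h hne).edges = l := rfl

/-- Head/tail count difference along a walk. -/
lemma W.count_tail_sub_head [DecidableEq V] : ∀ {a : V} {l : List E} {b : V}, W G a l b → ∀ (v : V),
    ((l.countP fun e => decide (G.tail e = v)) : ℤ)
      - (l.countP fun e => decide (G.head e = v))
      = (if a = v then 1 else 0) - (if b = v then 1 else 0) := by
  intro a l b h
  induction h with
  | nil => simp
  | @cons e l u b h1 h2 ih =>
    intro v
    subst h1
    have ih' := ih v
    simp only [List.countP_cons, decide_eq_true_eq]
    by_cases hT : G.tail e = v <;> by_cases hH : G.head e = v <;> by_cases hB : b = v <;>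
      simp only [hT, hH, hB, if_true, if_false, ite_true, ite_false] at ih' ⊢ <;>
      push_cast <;> omega

/-- Crossing count difference along a walk. -/
lemma W.cross_diff (S : Set V) : ∀ {a : V} {l : List E} {b : V}, W G a l b →
    ((l.countP fun e => decide (G.tail e ∈ S ∧ G.head e ∉ S)) : ℤ)
      - (l.countP fun e => decide (G.head e ∈ S ∧ G.tail e ∉ S))
      = (if a ∈ S then 1 else 0) - (if b ∈ S then 1 else 0) := by
  intro a l b h
  induction h with
  | nil => simp
  | @cons e l u b h1 h2 ih =>
    subst h1
    simp only [List.countP_cons, decide_eq_true_eq]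
    by_cases hT : G.tail e ∈ S <;> by_cases hH : G.head e ∈ S <;> by_cases hB : b ∈ S <;>
      simp only [hT, hH, hB, not_true, not_false_iff, and_true, and_false, true_and, false_and,
        if_true, if_false, ite_true, ite_false] at ih ⊢ <;>
      push_cast <;> omega

/-- Crossing counts: forward crossings = backward crossings + 1. -/
lemma W.crossings {a : V} {l : List E} {b : V} (h : W G a l b) (S : Set V)
    (ha : a ∈ S) (hb : b ∉ S) :
    (l.countP fun e => decide (G.tail e ∈ S ∧ G.head e ∉ S))
      = (l.countP fun e => decide (G.head e ∈ S ∧ G.tail e ∉ S)) + 1 := by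
  have := h.cross_diff S
  rw [if_pos ha, if_neg hb] at this
  omega

/-- Existence of a forward crossing edge. -/
lemma W.exists_forward {a : V} {l : List E} {b : V} (h : W G a l b) (S : Set V)
    (ha : a ∈ S) (hb : b ∉ S) : ∃ e ∈ l, G.tail e ∈ S ∧ G.head e ∉ S := by
  classical
  have hc := h.crossings S ha hb
  have hpos : 0 < l.countP fun e => decide (G.tail e ∈ S ∧ G.head e ∉ S) := by omega
  obtain ⟨e, he, hpe⟩ := List.countP_pos_iff.1 hpos
  simp only [decide_eq_true_eq] at hpe
  exact ⟨e, he, hpe⟩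

/-- Uniqueness of the forward crossing edge when there are no backward crossings. -/
lemma W.forward_unique {a : V} {l : List E} {b : V} (h : W G a l b) (S : Set V)
    (ha : a ∈ S) (hb : b ∉ S) (hnd : l.Nodup)
    (hz : ∀ e ∈ l, ¬(G.head e ∈ S ∧ G.tail e ∉ S)) :
    ∀ e ∈ l, (G.tail e ∈ S ∧ G.head e ∉ S) → ∀ e' ∈ l, (G.tail e' ∈ S ∧ G.head e' ∉ S) →
      e = e' := by
  classical
  have hc := h.crossings S ha hb
  have hz' : (l.countP fun e => decide (G.head e ∈ S ∧ G.tail e ∉ S)) = 0 := by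
    rw [List.countP_eq_zero]
    intro e he
    simpa using hz e he
  rw [hz'] at hc
  intro e he hpe e' he' hpe'
  exact countP_one_unique hnd hc he (by simpa using hpe) he' (by simpa using hpe')

/-- Suffix of a walk from an intermediate vertex. -/
lemma W.suffix : ∀ {a : V} {l : List E} {b : V}, W G a l b →
    ∀ {v : V}, v ∈ l.map G.head →
    ∃ l₂, W G v l₂ b ∧ l₂.length < l.length ∧ ∀ e ∈ l₂, e ∈ l := by
  intro a l b h
  induction h with
  | nil => intro v hv; simp at hv
  | @cons e l u b h1 h2 ih =>
    intro v hv
    rw [List.map_cons] at hv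
    rcases List.mem_cons.1 hv with hv | hv
    · exact ⟨l, hv ▸ h2, by simp, fun f hf => List.mem_cons_of_mem _ hf⟩
    · obtain ⟨l₂, hw, hlen, hsub⟩ := ih hv
      exact ⟨l₂, hw, by simp; omega, fun f hf => List.mem_cons_of_mem _ (hsub f hf)⟩

/-- Every walk contains a vertex-simple walk with the same endpoints. -/
lemma W.simplify : ∀ (n : ℕ) {a : V} {l : List E} {b : V}, l.length ≤ n → W G a l b →
    ∃ l', W G a l' b ∧ (∀ e ∈ l', e ∈ l) ∧ (a :: l'.map G.head).Nodup := by
  intro n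
  induction n with
  | zero =>
    intro a l b hlen h
    rw [List.length_eq_zero_iff.1 (Nat.le_zero.1 hlen)] at h ⊢
    exact ⟨[], h, by simp, by simp⟩
  | succ n ih =>
    intro a l b hlen h
    by_cases ha : a ∈ l.map G.head
    · obtain ⟨l₂, hw, hl2, hsub⟩ := h.suffix ha
      obtain ⟨l', hw', hsub', hnd⟩ := ih (by omega) hw
      exact ⟨l', hw', fun e he => hsub _ (hsub' e he), hnd⟩
    · cases h with
      | nil => exact ⟨[], .nil _, by simp, by simp⟩
      | @cons e l' u b h1 h2 =>
        obtain ⟨l'', hw'', hsub'', hnd''⟩ := ih (by simp at hlen; omega) h2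
        refine ⟨e :: l'', .cons h1 hw'', ?_, ?_⟩
        · intro f hf
          rcases List.mem_cons.1 hf with hf | hf
          · simp [hf]
          · exact List.mem_cons_of_mem _ (hsub'' f hf)
        · simp only [List.map_cons, List.nodup_cons]
          refine ⟨?_, List.nodup_cons.1 hnd''⟩
          intro hmem
          apply ha
          rcases List.mem_cons.1 hmem with hm | hm
          · simp [hm]
          · obtain ⟨f, hf, hf2⟩ := List.mem_map.1 hm
            exact List.mem_map.2 ⟨f, List.mem_cons_of_mem _ (hsub'' f hf), hf2⟩

lemma W.tail_mem : ∀ {a : V} {l : List E} {b : V}, W G a l b →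
    ∀ {e : E}, e ∈ l → G.tail e ∈ a :: l.map G.head := by
  intro a l b h
  induction h with
  | nil => intro e he; simp at he
  | @cons f l u b h1 h2 ih =>
    intro e he
    rcases List.mem_cons.1 he with he | he
    · subst he; rw [h1]; exact List.mem_cons_self
    · have := ih he
      rcases List.mem_cons.1 this with h3 | h3
      · simp [h3]
      · simp only [List.map_cons, List.mem_cons]
        right; right; exact h3

/-- A vertex-simple walk has no repeated edges. -/
lemma W.nodup_of_simple : ∀ {a : V} {l : List E} {b : V}, W G a l b →
    (a :: l.map G.head).Nodup → l.Nodup := by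
  intro a l b h
  induction h with
  | nil => intro _; simp
  | @cons e l u b h1 h2 ih =>
    intro hnd
    simp only [List.map_cons, List.nodup_cons] at hnd
    refine List.nodup_cons.2 ⟨?_, ih (List.nodup_cons.2 hnd.2)⟩
    intro hmem
    have := h2.tail_mem hmem
    rw [h1] at this
    exact hnd.1 this

section Deg

variable [Fintype E] [DecidableEq V]

/-- In-degree within an edge set. -/
def idegOn (G : Multigraph V E) (F : Finset E) (v : V) : ℕ :=
  (F.filter fun e => G.head e = v).card

/-- Out-degree within an edge set. -/
def odegOn (G : Multigraph V E) (F : Finset E) (v : V) : ℕ :=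
  (F.filter fun e => G.tail e = v).card

lemma idegOn_erase {F : Finset E} {e : E} (he : e ∈ F) (v : V) :
    ((G.idegOn (F.erase e) v : ℤ)) = G.idegOn F v - (if G.head e = v then 1 else 0) := by
  rw [idegOn, idegOn, Finset.filter_erase]
  by_cases h : G.head e = v
  · have h1 : e ∈ F.filter fun e => G.head e = v := Finset.mem_filter.2 ⟨he, h⟩
    rw [Finset.card_erase_of_mem h1, if_pos h]
    have h2 := Finset.card_pos.2 ⟨e, h1⟩
    omega
  · have h1 : (F.filter fun e => G.head e = v).erase e = F.filter fun e => G.head e = v :=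
      Finset.erase_eq_of_notMem (by simp [Finset.mem_filter, h])
    rw [h1, if_neg h]
    ring

lemma odegOn_erase {F : Finset E} {e : E} (he : e ∈ F) (v : V) :
    ((G.odegOn (F.erase e) v : ℤ)) = G.odegOn F v - (if G.tail e = v then 1 else 0) := by
  rw [odegOn, odegOn, Finset.filter_erase]
  by_cases h : G.tail e = v
  · have h1 : e ∈ F.filter fun e => G.tail e = v := Finset.mem_filter.2 ⟨he, h⟩
    rw [Finset.card_erase_of_mem h1, if_pos h]
    have h2 := Finset.card_pos.2 ⟨e, h1⟩
    omega
  · have h1 : (F.filter fun e => G.tail e = v).erase e = F.filter fun e => G.tail e = v :=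
      Finset.erase_eq_of_notMem (by simp [Finset.mem_filter, h])
    rw [h1, if_neg h]
    ring

lemma idegOn_sdiff {F : Finset E} {l : List E} (hl : l.Nodup) (hsub : ∀ e ∈ l, e ∈ F) (v : V) :
    ((G.idegOn (F \ l.toFinset) v : ℤ))
      = G.idegOn F v - l.countP fun e => decide (G.head e = v) := by
  classical
  induction l generalizing F with
  | nil => simp
  | cons e l ih =>
    have hnd := List.nodup_cons.1 hl
    have hset : F \ (e :: l).toFinset = (F.erase e) \ l.toFinset := by
      ext f; simp [Finset.mem_sdiff, Finset.mem_erase]; tauto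
    rw [hset, ih hnd.2 (fun f hf => Finset.mem_erase.2
      ⟨fun hfe => hnd.1 (by rw [← hfe]; exact hf), hsub f (List.mem_cons_of_mem _ hf)⟩),
      idegOn_erase (hsub e List.mem_cons_self), List.countP_cons]
    simp only [decide_eq_true_eq]
    by_cases h : G.head e = v <;> simp [h] <;> push_cast <;> ring

lemma odegOn_sdiff {F : Finset E} {l : List E} (hl : l.Nodup) (hsub : ∀ e ∈ l, e ∈ F) (v : V) :
    ((G.odegOn (F \ l.toFinset) v : ℤ))
      = G.odegOn F v - l.countP fun e => decide (G.tail e = v) := by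
  classical
  induction l generalizing F with
  | nil => simp
  | cons e l ih =>
    have hnd := List.nodup_cons.1 hl
    have hset : F \ (e :: l).toFinset = (F.erase e) \ l.toFinset := by
      ext f; simp [Finset.mem_sdiff, Finset.mem_erase]; tauto
    rw [hset, ih hnd.2 (fun f hf => Finset.mem_erase.2
      ⟨fun hfe => hnd.1 (by rw [← hfe]; exact hf), hsub f (List.mem_cons_of_mem _ hf)⟩),
      odegOn_erase (hsub e List.mem_cons_self), List.countP_cons]
    simp only [decide_eq_true_eq]
    by_cases h : G.tail e = v <;> simp [h] <;> push_cast <;> ring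

lemma card_filter_toFinset (p : E → Prop) [DecidablePred p] {l : List E} (hl : l.Nodup) :
    (l.toFinset.filter p).card = l.countP fun e => decide (p e) := by
  classical
  induction l with
  | nil => simp
  | cons e l ih =>
    have h1 := List.nodup_cons.1 hl
    rw [List.toFinset_cons, List.countP_cons, Finset.filter_insert]
    by_cases hp : p e
    · rw [if_pos hp, Finset.card_insert_of_notMem
        (fun hc => h1.1 (List.mem_toFinset.1 (Finset.mem_filter.1 hc).1)), ih h1.2]
      simp [hp]
    · rw [if_neg hp, ih h1.2]
      simp [hp]

/-- Trail extraction (Lemma A). -/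
lemma trail_extract (t : V) : ∀ (N : ℕ) (F : Finset E), F.card ≤ N →
    (∀ v, v ≠ t → (G.idegOn F v : ℤ) ≤ G.odegOn F v) →
    ∀ a, (G.idegOn F a : ℤ) < G.odegOn F a →
    ∃ l, W G a l t ∧ l ≠ [] ∧ l.Nodup ∧ ∀ e ∈ l, e ∈ F := by
  intro N
  induction N with
  | zero =>
    intro F hF hbal a ha
    have hFe : F = ∅ := Finset.card_eq_zero.1 (Nat.le_zero.1 hF)
    subst hFe
    simp [idegOn, odegOn] at ha
  | succ N ih =>
    intro F hF hbal a ha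
    have h1 : 0 < G.odegOn F a := by omega
    obtain ⟨e, he⟩ := Finset.card_pos.1 h1
    have heF : e ∈ F := (Finset.mem_filter.1 he).1
    have hea : G.tail e = a := (Finset.mem_filter.1 he).2
    by_cases het : G.head e = t
    · refine ⟨[e], .cons hea ?_, by simp, by simp, by simp [heF]⟩
      rw [het]; exact W.nil t
    · have hcard : (F.erase e).card ≤ N := by
        rw [Finset.card_erase_of_mem heF]; omega
      have hbal' : ∀ v, v ≠ t → (G.idegOn (F.erase e) v : ℤ) ≤ G.odegOn (F.erase e) v := by
        intro v hv
        rw [idegOn_erase heF, odegOn_erase heF]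
        have h2 := hbal v hv
        by_cases hT : G.tail e = v
        · have hav : a = v := by rw [← hea, hT]
          subst hav
          rw [if_pos hT]
          by_cases hH : G.head e = a
          · rw [if_pos hH]; omega
          · rw [if_neg hH]; omega
        · by_cases hH : G.head e = v <;> simp only [hH, hT, if_true, if_false,
            ite_true, ite_false] <;> omega
      have hstr : (G.idegOn (F.erase e) (G.head e) : ℤ) < G.odegOn (F.erase e) (G.head e) := by
        rw [idegOn_erase heF, odegOn_erase heF, if_pos rfl]
        by_cases hT : G.tail e = G.head e
        · have hav : a = G.head e := by rw [← hea, hT]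
          rw [← hav] at *
          simp only [hT, if_pos rfl] at *
          omega
        · have h2 := hbal (G.head e) het
          simp only [hT, if_false, ite_false]
          omega
      obtain ⟨l, hw, hne, hnd, hsub⟩ := ih (F.erase e) hcard hbal' (G.head e) hstr
      refine ⟨e :: l, .cons hea hw, by simp, List.nodup_cons.2
        ⟨fun hc => (Finset.mem_erase.1 (hsub e hc)).1 rfl, hnd⟩, ?_⟩
      intro f hf
      rcases List.mem_cons.1 hf with hf | hf
      · rw [hf]; exact heF
      · exact Finset.mem_of_mem_erase (hsub f hf)

/-- Decomposition (Lemma B). -/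
lemma decompose (s t : V) (hst : s ≠ t) : ∀ (n : ℕ) (F : Finset E),
    (∀ v, v ≠ s → v ≠ t → (G.idegOn F v : ℤ) = G.odegOn F v) →
    (G.idegOn F s : ℤ) + n ≤ G.odegOn F s →
    ∃ L : Fin n → List E, (∀ i, W G s (L i) t ∧ L i ≠ [] ∧ (L i).Nodup ∧ ∀ e ∈ L i, e ∈ F)
      ∧ ∀ i j, i ≠ j → ∀ e ∈ L i, e ∉ L j := by
  intro n
  induction n with
  | zero =>
    intro F _ _
    exact ⟨fun i => i.elim0, fun i => i.elim0, fun i => i.elim0⟩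
  | succ n ih =>
    intro F hbal hexc
    obtain ⟨l, hw, hne, hnd, hsub⟩ := trail_extract (G := G) t F.card F le_rfl
      (by
        intro v hv
        by_cases hvs : v = s
        · subst hvs; omega
        · have := hbal v hvs hv; omega)
      s (by omega)
    have hcnt := hw.count_tail_sub_head
    have hbal2 : ∀ v, v ≠ s → v ≠ t →
        (G.idegOn (F \ l.toFinset) v : ℤ) = G.odegOn (F \ l.toFinset) v := by
      intro v hvs hvt
      rw [idegOn_sdiff hnd hsub, odegOn_sdiff hnd hsub]
      have h1 := hcnt v
      rw [if_neg (fun h => hvs h.symm), if_neg (fun h => hvt h.symm)] at h1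
      have h2 := hbal v hvs hvt
      omega
    have hexc2 : (G.idegOn (F \ l.toFinset) s : ℤ) + n ≤ G.odegOn (F \ l.toFinset) s := by
      rw [idegOn_sdiff hnd hsub, odegOn_sdiff hnd hsub]
      have h1 := hcnt s
      rw [if_pos rfl, if_neg (fun h => hst h.symm)] at h1
      omega
    obtain ⟨L, hL, hdisj⟩ := ih (F \ l.toFinset) hbal2 hexc2
    have hLl : ∀ i, ∀ e ∈ L i, e ∉ l := by
      intro i e he hel
      have := (hL i).2.2.2 e he
      rw [Finset.mem_sdiff] at this
      exact this.2 (List.mem_toFinset.2 hel)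
    refine ⟨Fin.cons l L, ?_, ?_⟩
    · intro i
      refine Fin.cases ?_ ?_ i
      · exact ⟨hw, hne, hnd, hsub⟩
      · intro j
        refine ⟨(hL j).1, (hL j).2.1, (hL j).2.2.1, fun e he => ?_⟩
        have := (hL j).2.2.2 e he
        rw [Finset.mem_sdiff] at this
        exact this.1
    · intro i j hij e hei
      rcases Fin.eq_zero_or_eq_succ i with hi | ⟨i', rfl⟩ <;>
        rcases Fin.eq_zero_or_eq_succ j with hj | ⟨j', rfl⟩
      · exact absurd (hi.trans hj.symm) hij
      · subst hi
        rw [Fin.cons_zero] at hei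
        rw [Fin.cons_succ]
        exact fun hej => hLl j' e hej hei
      · subst hj
        rw [Fin.cons_succ] at hei
        rw [Fin.cons_zero]
        exact hLl i' e hei
      · rw [Fin.cons_succ] at hei
        rw [Fin.cons_succ]
        exact hdisj i' j' (fun h => hij (by rw [h])) e hei

end Deg


lemma mem_filterMap_inl {α : Type} {l : List (α ⊕ α)} {e : α} :
    e ∈ l.filterMap (Sum.elim some fun _ => none) ↔ Sum.inl e ∈ l := by
  rw [List.mem_filterMap]
  constructor
  · rintro ⟨x, hx, hfx⟩
    rcases x with y | y
    · simp only [Sum.elim_inl, Option.some.injEq] at hfx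
      rwa [hfx] at hx
    · simp at hfx
  · intro hx; exact ⟨Sum.inl e, hx, rfl⟩

lemma mem_filterMap_inr {α : Type} {l : List (α ⊕ α)} {e : α} :
    e ∈ l.filterMap (Sum.elim (fun _ => none) some) ↔ Sum.inr e ∈ l := by
  rw [List.mem_filterMap]
  constructor
  · rintro ⟨x, hx, hfx⟩
    rcases x with y | y
    · simp at hfx
    · simp only [Sum.elim_inr, Option.some.injEq] at hfx
      rwa [hfx] at hx
  · intro hx; exact ⟨Sum.inr e, hx, rfl⟩

lemma nodup_filterMap_inl {α : Type} {l : List (α ⊕ α)} (h : l.Nodup) :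
    (l.filterMap (Sum.elim some fun _ => none)).Nodup := by
  refine h.filterMap ?_
  intro a b c hca hcb
  rcases a with x | x <;> rcases b with y | y <;>
    simp only [Sum.elim_inl, Sum.elim_inr, Option.mem_def, Option.some.injEq] at hca hcb <;>
    first
    | (rw [hca, hcb])
    | simp at hca
    | simp at hcb

lemma nodup_filterMap_inr {α : Type} {l : List (α ⊕ α)} (h : l.Nodup) :
    (l.filterMap (Sum.elim (fun _ => none) some)).Nodup := by
  refine h.filterMap ?_
  intro a b c hca hcb
  rcases a with x | x <;> rcases b with y | y <;>
    simp only [Sum.elim_inl, Sum.elim_inr, Option.mem_def, Option.some.injEq] at hca hcb <;>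
    first
    | (rw [hca, hcb])
    | simp at hca
    | simp at hcb

/-- Residual graph of an edge set. -/
def residual (G : Multigraph V E) : Multigraph V (E ⊕ E) where
  tail := Sum.elim G.tail G.head
  head := Sum.elim G.head G.tail

set_option maxHeartbeats 1600000 in
/-- Augmenting step. -/
lemma augment [Fintype V] [Fintype E] [DecidableEq V] (s t : V) (hst : s ≠ t) (n : ℕ)
    (h : G.HasEdgeDisjoint s t n)
    (hcut : ∀ S : Finset V, s ∈ S → t ∉ S → n < (G.cutE S).card) :
    G.HasEdgeDisjoint s t (n + 1) := by
  classical
  obtain ⟨P, hP⟩ := h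
  have hsimp : ∀ i : Fin n, ∃ l, W G s l t ∧ (∀ e ∈ l, e ∈ (P i).edges) ∧
      (s :: l.map G.head).Nodup :=
    fun i => W.simplify (P i).edges.length le_rfl (toW (P i))
  choose L hLW hLsub hLs using hsimp
  have hLnd : ∀ i, (L i).Nodup := fun i => (hLW i).nodup_of_simple (hLs i)
  have hLdisj : ∀ i j, i ≠ j → ∀ e ∈ L i, e ∉ L j := by
    intro i j hij e hei hej
    have h1 : e ∈ (P i).edgeSet ∩ (P j).edgeSet := ⟨hLsub i e hei, hLsub j e hej⟩
    rw [hP i j hij] at h1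
    exact h1
  set F : Finset E := Finset.univ.biUnion (fun i => (L i).toFinset) with hFdef
  have hmemF : ∀ e, e ∈ F ↔ ∃ i, e ∈ L i := by
    intro e
    simp [hFdef, List.mem_toFinset]
  -- degree identity for F
  have hdegF : ∀ v, (G.odegOn F v : ℤ) - G.idegOn F v
      = n * ((if s = v then 1 else 0) - (if t = v then 1 else 0)) := by
    intro v
    have hdisjT : ∀ i : Fin n, ∀ _ : i ∈ (Finset.univ : Finset (Fin n)),
        ∀ j : Fin n, ∀ _ : j ∈ (Finset.univ : Finset (Fin n)), i ≠ j →
        Disjoint ((L i).toFinset) ((L j).toFinset) := by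
      intro i _ j _ hij
      rw [Finset.disjoint_left]
      intro e hei hej
      exact hLdisj i j hij e (List.mem_toFinset.1 hei) (List.mem_toFinset.1 hej)
    have hodeg : G.odegOn F v = ∑ i : Fin n, (L i).countP fun e => decide (G.tail e = v) := by
      rw [odegOn, hFdef, Finset.filter_biUnion, Finset.card_biUnion]
      · exact Finset.sum_congr rfl fun i _ => card_filter_toFinset _ (hLnd i)
      · intro i hi j hj hij
        exact Finset.disjoint_filter_filter (hdisjT i hi j hj hij)
    have hideg : G.idegOn F v = ∑ i : Fin n, (L i).countP fun e => decide (G.head e = v) := by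
      rw [idegOn, hFdef, Finset.filter_biUnion, Finset.card_biUnion]
      · exact Finset.sum_congr rfl fun i _ => card_filter_toFinset _ (hLnd i)
      · intro i hi j hj hij
        exact Finset.disjoint_filter_filter (hdisjT i hi j hj hij)
    rw [hodeg, hideg]
    push_cast
    rw [← Finset.sum_sub_distrib]
    rw [Finset.sum_congr rfl fun (i : Fin n) _ => (hLW i).count_tail_sub_head v]
    simp [mul_comm]
    split_ifs <;> simp
  -- residual reachability
  set Valid : E ⊕ E → Prop := Sum.elim (fun e => e ∉ F) (fun e => e ∈ F) with hValid
  set R : Set V := {v | v = s ∨ ∃ l, W G.residual s l v ∧ ∀ x ∈ l, Valid x} with hRdef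
  have hsR : s ∈ R := Or.inl rfl
  have hclosed : ∀ u, u ∈ R → ∀ x : E ⊕ E, Valid x → G.residual.tail x = u →
      G.residual.head x ∈ R := by
    intro u hu x hx htail
    rcases hu with hu | ⟨l, hw, hval⟩
    · refine Or.inr ⟨[x], .cons (htail.trans hu) (W.nil _), ?_⟩
      intro y hy
      rw [List.mem_singleton.1 hy]
      exact hx
    · refine Or.inr ⟨l ++ [x], hw.append (.cons htail (W.nil _)), ?_⟩
      intro y hy
      rcases List.mem_append.1 hy with hy | hy
      · exact hval y hy
      · rw [List.mem_singleton.1 hy]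
        exact hx
  have htR : t ∈ R := by
    by_contra htR
    letI : DecidablePred (fun v => v ∈ R) := fun v => Classical.propDecidable _
    set S' : Finset V := Finset.univ.filter (fun v => v ∈ R) with hS'
    have hsS' : s ∈ S' := Finset.mem_filter.2 ⟨Finset.mem_univ _, hsR⟩
    have htS' : t ∉ S' := fun hc => htR (Finset.mem_filter.1 hc).2
    have hmemS' : ∀ v, v ∈ S' ↔ v ∈ R := by
      intro v; simp [hS']
    have key1 : ∀ e, G.tail e ∈ R → G.head e ∉ R → e ∈ F := by
      intro e h1 h2
      by_contra heF
      exact h2 (hclosed _ h1 (Sum.inl e) heF rfl)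
    have key2 : ∀ e ∈ F, G.head e ∈ R → G.tail e ∈ R := by
      intro e heF h1
      exact hclosed _ h1 (Sum.inr e) heF rfl
    -- the forward crossing edge in each L i is unique
    have hone : ∀ i : Fin n, ∀ e ∈ L i, (G.tail e ∈ R ∧ G.head e ∉ R) →
        ∀ e' ∈ L i, (G.tail e' ∈ R ∧ G.head e' ∉ R) → e = e' := by
      intro i
      refine (hLW i).forward_unique R hsR htR (hLnd i) ?_
      intro e he
      rintro ⟨h1, h2⟩
      exact h2 (key2 e ((hmemF e).2 ⟨i, he⟩) h1)
    -- injection from the cut into Fin n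
    have hcutF : ∀ e ∈ G.cutE S', ∃ i : Fin n, e ∈ L i ∧
        (G.tail e ∈ R ∧ G.head e ∉ R) := by
      intro e he
      rw [cutE, Finset.mem_filter] at he
      have h1 : G.tail e ∈ R := (hmemS' _).1 he.2.1
      have h2 : G.head e ∉ R := fun hc => he.2.2 ((hmemS' _).2 hc)
      obtain ⟨i, hi⟩ := (hmemF e).1 (key1 e h1 h2)
      exact ⟨i, hi, h1, h2⟩
    choose g hg1 hg2 using hcutF
    have hinj := Finset.card_le_card_of_injOn (fun e => g e.1 e.2)
      (s := (G.cutE S').attach) (t := Finset.univ)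
      (fun _ _ => Finset.mem_univ _)
      (by
        intro e he e' he' heq
        have heq' : g e.1 e.2 = g e'.1 e'.2 := heq
        have h2 := hg1 e'.1 e'.2
        rw [← heq'] at h2
        have := hone (g e.1 e.2) e.1 (hg1 e.1 e.2) (hg2 e.1 e.2) e'.1 h2 (hg2 e'.1 e'.2)
        exact Subtype.ext this)
    rw [Finset.card_attach, Finset.card_univ, Fintype.card_fin] at hinj
    exact absurd hinj (not_le.2 (hcut S' hsS' htS'))
  -- extract a simple residual walk
  obtain ⟨l₀, hw₀, hval₀⟩ : ∃ l, W G.residual s l t ∧ ∀ x ∈ l, Valid x := by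
    rcases htR with h1 | h1
    · exact absurd h1.symm hst
    · exact h1
  obtain ⟨l₁, hw₁, hsub₁, hs₁⟩ := W.simplify l₀.length le_rfl hw₀
  have hval₁ : ∀ x ∈ l₁, Valid x := fun x hx => hval₀ x (hsub₁ x hx)
  have hnd₁ : l₁.Nodup := hw₁.nodup_of_simple hs₁
  set addL : List E := l₁.filterMap (Sum.elim some fun _ => none) with haddL
  set remL : List E := l₁.filterMap (Sum.elim (fun _ => none) some) with hremL
  have hmem_add : ∀ e, e ∈ addL ↔ Sum.inl e ∈ l₁ := fun e => mem_filterMap_inl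
  have hmem_rem : ∀ e, e ∈ remL ↔ Sum.inr e ∈ l₁ := fun e => mem_filterMap_inr
  have hadd_nF : ∀ e ∈ addL, e ∉ F := by
    intro e he
    have := hval₁ _ ((hmem_add e).1 he)
    simpa [hValid] using this
  have hrem_F : ∀ e ∈ remL, e ∈ F := by
    intro e he
    have := hval₁ _ ((hmem_rem e).1 he)
    simpa [hValid] using this
  have hadd_nd : addL.Nodup := nodup_filterMap_inl hnd₁
  have hrem_nd : remL.Nodup := nodup_filterMap_inr hnd₁
  set F' : Finset E := (F \ remL.toFinset) ∪ addL.toFinset with hF'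
  -- degree identity for F'
  have hdegF' : ∀ v, (G.odegOn F' v : ℤ) - G.idegOn F' v
      = (n+1) * ((if s = v then 1 else 0) - (if t = v then 1 else 0)) := by
    intro v
    have hdisjU : Disjoint (F \ remL.toFinset) addL.toFinset := by
      rw [Finset.disjoint_right]
      intro e he
      rw [Finset.mem_sdiff]
      rintro ⟨heF, -⟩
      exact hadd_nF e (List.mem_toFinset.1 he) heF
    have hiU : (G.idegOn F' v : ℤ)
        = G.idegOn (F \ remL.toFinset) v + G.idegOn addL.toFinset v := by
      rw [hF', idegOn, Finset.filter_union,
        Finset.card_union_of_disjoint (Finset.disjoint_filter_filter hdisjU)]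
      push_cast
      rfl
    have hoU : (G.odegOn F' v : ℤ)
        = G.odegOn (F \ remL.toFinset) v + G.odegOn addL.toFinset v := by
      rw [hF', odegOn, Finset.filter_union,
        Finset.card_union_of_disjoint (Finset.disjoint_filter_filter hdisjU)]
      push_cast
      rfl
    have hiS := G.idegOn_sdiff hrem_nd (fun e he => hrem_F e he) v
    have hoS := G.odegOn_sdiff hrem_nd (fun e he => hrem_F e he) v
    have hiA : (G.idegOn addL.toFinset v : ℤ)
        = addL.countP fun e => decide (G.head e = v) := by
      rw [idegOn, card_filter_toFinset _ hadd_nd]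
    have hoA : (G.odegOn addL.toFinset v : ℤ)
        = addL.countP fun e => decide (G.tail e = v) := by
      rw [odegOn, card_filter_toFinset _ hadd_nd]
    -- residual telescoping
    have htel := hw₁.count_tail_sub_head v
    have hsplit1 := countP_sum_split l₁ (fun x => decide (G.residual.tail x = v))
    have hsplit2 := countP_sum_split l₁ (fun x => decide (G.residual.head x = v))
    have e1 : (fun e : E => decide (G.residual.tail (Sum.inl e) = v))
        = fun e => decide (G.tail e = v) := rfl
    have e2 : (fun e : E => decide (G.residual.tail (Sum.inr e) = v))
        = fun e => decide (G.head e = v) := rfl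
    have e3 : (fun e : E => decide (G.residual.head (Sum.inl e) = v))
        = fun e => decide (G.head e = v) := rfl
    have e4 : (fun e : E => decide (G.residual.head (Sum.inr e) = v))
        = fun e => decide (G.tail e = v) := rfl
    rw [← haddL, ← hremL, e1, e2] at hsplit1
    rw [← haddL, ← hremL, e3, e4] at hsplit2
    rw [hsplit1, hsplit2] at htel
    have hd := hdegF v
    rw [hiU, hoU, hiS, hoS, hiA, hoA]
    by_cases hsv : s = v <;> by_cases htv : t = v
    all_goals try simp only [hsv, htv, eq_self_iff_true, if_true, if_false, ite_true,
      ite_false] at htel hd ⊢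
    all_goals try ring_nf at htel hd ⊢
    all_goals omega
  -- decompose F' into n+1 disjoint trails
  obtain ⟨L', hL', hdisj'⟩ := G.decompose s t hst (n+1) F'
    (by
      intro v hvs hvt
      have := hdegF' v
      rw [if_neg (fun h => hvs h.symm), if_neg (fun h => hvt h.symm)] at this
      omega)
    (by
      have := hdegF' s
      rw [if_pos rfl, if_neg (fun h => hst h.symm)] at this
      omega)
  refine ⟨fun i => mkWalk (hL' i).1 (hL' i).2.1, ?_⟩
  intro i j hij
  rw [Set.eq_empty_iff_forall_notMem]
  rintro e ⟨hei, hej⟩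
  exact hdisj' i j hij e hei hej

/-- Upper bound: edge-disjoint walks are at most any cut. -/
lemma edgeDisjoint_le_cut [Fintype V] [Fintype E] [DecidableEq V] {s t : V} {n : ℕ}
    (h : G.HasEdgeDisjoint s t n) (S : Finset V) (hs : s ∈ S) (ht : t ∉ S) :
    n ≤ (G.cutE S).card := by
  classical
  obtain ⟨P, hP⟩ := h
  have hex : ∀ i : Fin n, ∃ e, e ∈ (P i).edges ∧ G.tail e ∈ S ∧ G.head e ∉ S := by
    intro i
    have hw := toW (P i)
    obtain ⟨e, he, h1, h2⟩ := hw.exists_forward (↑S : Set V) (by simpa) (by simpa)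
    exact ⟨e, he, by simpa using h1, by simpa using h2⟩
  choose f hf1 hf2 using hex
  have := Finset.card_le_card_of_injOn (s := (Finset.univ : Finset (Fin n))) (t := G.cutE S) f
    (fun i _ => by rw [cutE, Finset.mem_coe, Finset.mem_filter]; exact ⟨Finset.mem_univ _, hf2 i⟩)
    (fun i _ j _ hij => by
      by_contra hne
      have h1 := (hP i j hne).le
      have : f i ∈ (P i).edgeSet ∩ (P j).edgeSet := ⟨hf1 i, hij ▸ hf1 j⟩
      rw [(hP i j hne)] at this
      exact this)
  simpa using this

end Multigraph


/-- The maximum number of pairwise internally-disjoint `s`-`t`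
paths is at most the maximum number of pairwise edge-disjoint `s`-`t` paths,
which (Menger, edge version) equals the minimum size of an `s,t`-edge cut. -/
theorem stmt9 {V E : Type} [Fintype V] [Fintype E] [DecidableEq V]
    (G : Multigraph V E) (s t : V) (hst : s ≠ t) :
    (∀ n, G.HasIntDisjoint s t n → G.HasEdgeDisjoint s t n) ∧
    ∃ k : ℕ,
      (G.HasEdgeDisjoint s t k ∧ ∀ n, G.HasEdgeDisjoint s t n → n ≤ k) ∧
      (∃ S : Finset V, s ∈ S ∧ t ∉ S ∧ (G.cutE S).card = k) ∧
      (∀ S : Finset V, s ∈ S → t ∉ S → k ≤ (G.cutE S).card) := by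
  classical
  constructor
  · rintro n ⟨P, hP⟩
    exact ⟨P, fun i j hij => (hP i j hij).2⟩
  · obtain ⟨S₀, hS₀mem, hS₀min⟩ := Finset.exists_min_image
      (Finset.univ.filter fun S : Finset V => s ∈ S ∧ t ∉ S) (fun S => (G.cutE S).card)
      ⟨{s}, Finset.mem_filter.2 ⟨Finset.mem_univ _, Finset.mem_singleton_self s,
        fun hc => hst (Finset.mem_singleton.1 hc).symm⟩⟩
    have hs0 : s ∈ S₀ ∧ t ∉ S₀ := (Finset.mem_filter.1 hS₀mem).2
    have hmin : ∀ S : Finset V, s ∈ S → t ∉ S → (G.cutE S₀).card ≤ (G.cutE S).card := by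
      intro S hsS htS
      exact hS₀min S (Finset.mem_filter.2 ⟨Finset.mem_univ _, hsS, htS⟩)
    refine ⟨(G.cutE S₀).card, ⟨?_, ?_⟩, ⟨S₀, hs0.1, hs0.2, rfl⟩, hmin⟩
    · have hall : ∀ m, m ≤ (G.cutE S₀).card → G.HasEdgeDisjoint s t m := by
        intro m
        induction m with
        | zero => exact fun _ => ⟨fun i => i.elim0, fun i => i.elim0⟩
        | succ m ih =>
          intro hm
          refine G.augment s t hst m (ih (by omega)) ?_
          intro S hsS htS
          have h1 := hmin S hsS htS
          omega
      exact hall _ le_rfl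
    · intro n hn
      exact G.edgeDisjoint_le_cut hn S₀ hs0.1 hs0.2
end

section
/- Let G be a finite directed acyclic multigraph with source s, all other vertices untrusted, such that every non-source vertex has diversity exactly d, no parallel edges exist except possibly out of s, and some sink t has in-degree exactly d. Then the multicast capacity of the broadcast-transformed network equals the multicast capacity of the original network, both being d. Formally: min over sinks t of the minimum s,t-edge cut size in G equals min over sinks t of the maximum number of internally-disjoint s-to-t paths in G, and both equal d. -/
namespace Multigraph
set_option linter.unusedSectionVars false
set_option linter.unusedVariables false
open List

section Aux
variable {V E : Type}

open List

def Walk.single {G : Multigraph V E} {u v : V} (e : E) (h1 : G.tail e = u) (h2 : G.head e = v) :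
    G.Walk u v where
  edges := [e]
  ne := by simp
  first := h1
  last := h2
  chain := isChain_singleton e

def Walk.cons {G : Multigraph V E} {v t : V} (e : E) (w : G.Walk v t) (h : G.head e = v) :
    G.Walk (G.tail e) t where
  edges := e :: w.edges
  ne := by simp
  first := rfl
  last := by rw [List.getLast_cons w.ne]; exact w.last
  chain := by
    show List.IsChain _ _; rw [List.isChain_cons]
    refine ⟨fun f hf => ?_, w.chain⟩
    have hf' : f = w.edges.head w.ne := by
      rw [List.head?_eq_head w.ne] at hf; exact (Option.some_inj.mp hf).symm
    rw [hf', w.first, h]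

def Walk.concat {G : Multigraph V E} {u v : V} (w : G.Walk u v) (e : E) (h : G.tail e = v) :
    G.Walk u (G.head e) where
  edges := w.edges ++ [e]
  ne := by simp
  first := by
    have : (w.edges ++ [e]).head (by simp) = w.edges.head w.ne := by
      rw [List.head_append_of_ne_nil w.ne]
    rw [this]; exact w.first
  last := by
    have : (w.edges ++ [e]).getLast (by simp) = e := List.getLast_append _
    rw [this]
  chain := by
    show List.IsChain _ _; rw [List.isChain_append]
    refine ⟨w.chain, isChain_singleton e, fun x hx y hy => ?_⟩
    simp only [List.head?_cons, Option.mem_def, Option.some_inj] at hy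
    rw [List.getLast?_eq_getLast w.ne] at hx
    simp only [Option.mem_def, Option.some_inj] at hx
    subst hx; subst hy; rw [w.last, h]

def edgeRel (G : Multigraph V E) : V → V → Prop := fun u v => ∃ e, G.tail e = u ∧ G.head e = v

lemma walk_of_transGen {G : Multigraph V E} {u v : V}
    (h : Relation.TransGen G.edgeRel u v) : Nonempty (G.Walk u v) := by
  induction h with
  | single h => obtain ⟨e, h1, h2⟩ := h; exact ⟨h2 ▸ Walk.single e h1 rfl⟩
  | tail _ h ih => obtain ⟨e, h1, h2⟩ := h; exact ⟨h2 ▸ ih.some.concat e h1⟩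

lemma wf_edgeRel [Finite V] {G : Multigraph V E} (h : G.Acyclic) : WellFounded G.edgeRel := by
  have irr : ∀ v, ¬ Relation.TransGen G.edgeRel v v :=
    fun v hv => (h v).false (walk_of_transGen hv).some
  have hwf : WellFounded (Relation.TransGen G.edgeRel) := by
    letI : IsTrans V (Relation.TransGen G.edgeRel) := ⟨fun _ _ _ => Relation.TransGen.trans⟩
    letI : IsIrrefl V (Relation.TransGen G.edgeRel) := ⟨irr⟩
    exact Finite.wellFounded_of_trans_of_irrefl _
  exact Subrelation.wf (fun h => Relation.TransGen.single h) hwf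

open Classical in
noncomputable def pot (G : Multigraph V E) [Fintype V] (v : V) : ℕ :=
  (Finset.univ.filter (fun w => Relation.ReflTransGen G.edgeRel w v)).card

lemma pot_lt {G : Multigraph V E} [Fintype V] (hacyc : G.Acyclic) (e : E) :
    G.pot (G.tail e) < G.pot (G.head e) := by
  classical
  have irr : ∀ v, ¬ Relation.TransGen G.edgeRel v v :=
    fun v hv => (hacyc v).false (walk_of_transGen hv).some
  apply Finset.card_lt_card
  constructor
  · intro w hw
    simp only [Finset.mem_filter, Finset.mem_univ, true_and] at hw ⊢
    exact hw.tail ⟨e, rfl, rfl⟩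
  · intro hsub
    have h1 : G.head e ∈ Finset.univ.filter
        (fun w => Relation.ReflTransGen G.edgeRel w (G.head e)) := by
      simp [Relation.ReflTransGen.refl]
    have h2 := hsub h1
    simp only [Finset.mem_filter, Finset.mem_univ, true_and] at h2
    exact irr _ (Relation.TransGen.tail' h2 ⟨e, rfl, rfl⟩)

/-- In an acyclic graph, every walk is simple. -/
lemma Walk.isSimple_of_acyclic {G : Multigraph V E} [Fintype V] {s t : V} (hacyc : G.Acyclic)
    (w : G.Walk s t) : (s :: w.edges.map G.head).Nodup := by
  classical
  have hch : (s :: w.edges.map G.head).Chain' (fun a b => G.pot a < G.pot b) := by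
    show List.IsChain _ _; rw [List.isChain_cons]
    constructor
    · intro y hy
      rw [List.head?_map] at hy
      rw [List.head?_eq_head w.ne] at hy
      simp only [Option.map_some, Option.mem_def, Option.some_inj] at hy
      subst hy
      have h := pot_lt hacyc (w.edges.head w.ne)
      rwa [w.first] at h
    · rw [List.isChain_map]
      exact w.chain.imp (fun {e f} h => by rw [h]; exact pot_lt hacyc f)
  letI : IsTrans V (fun a b => G.pot a < G.pot b) := ⟨fun _ _ _ => lt_trans⟩
  have := (List.isChain_iff_pairwise).mp hch
  exact this.imp (fun {a b} h => fun heq => absurd (heq ▸ h) (lt_irrefl _))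

def op (G : Multigraph V E) : Multigraph V E := ⟨G.head, G.tail⟩

def Walk.rev {G : Multigraph V E} {u v : V} (w : G.op.Walk u v) : G.Walk v u where
  edges := w.edges.reverse
  ne := by simpa using w.ne
  first := by
    rw [List.head_reverse]; exact w.last
  last := by
    rw [List.getLast_reverse]; exact w.first
  chain := by
    show List.IsChain _ _; rw [List.isChain_reverse]
    exact w.chain.imp (fun {e f} h => h.symm)

lemma op_acyclic {G : Multigraph V E} (h : G.Acyclic) : G.op.Acyclic :=
  fun v => ⟨fun w => (h v).false w.rev⟩



section Counts
variable {V E : Type} [DecidableEq V] [DecidableEq E]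
open List

lemma tails_eq_aux (X : Multigraph V E) :
    ∀ (l : List E) (hne : l ≠ []) (a : V), X.tail (l.head hne) = a →
    l.Chain' (fun e f => X.head e = X.tail f) →
    l.map X.tail = (a :: l.map X.head).dropLast := by
  intro l
  induction l with
  | nil => simp
  | cons e r ih =>
    intro hne a h1 hch
    cases r with
    | nil => simp only [List.map_cons, List.map_nil] at *; simp [← h1]
    | cons f r2 =>
      have hch' := List.isChain_cons.mp hch
      have hhead : X.head e = X.tail ((f :: r2).head (by simp)) := by
        apply hch'.1
        rw [List.head?_eq_head (by simp : f :: r2 ≠ [])]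
        rfl
      have hih := ih (by simp) (X.head e) hhead.symm hch'.2
      simp only [List.map_cons] at *
      rw [List.dropLast_cons₂, ← hih]
      have : X.tail e = a := h1
      rw [this]

lemma walk_filter_card (X : Multigraph V E) {a b : V} (w : X.Walk a b)
    (hnd : (a :: w.edges.map X.head).Nodup) (v : V) :
    ((w.edges.toFinset.filter (fun e => X.tail e = v)).card
      = if v ∈ (a :: w.edges.map X.head).dropLast then 1 else 0) ∧
    ((w.edges.toFinset.filter (fun e => X.head e = v)).card
      = if v ∈ w.edges.map X.head then 1 else 0) := by
  have key : ∀ (f : E → V), (w.edges.map f).Nodup →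
      (w.edges.toFinset.filter (fun e => f e = v)).card
        = if v ∈ w.edges.map f then 1 else 0 := by
    intro f hf
    have hinj : Set.InjOn f ↑(w.edges.toFinset.filter (fun e => f e = v)) := by
      intro x hx y hy hxy
      simp only [Finset.coe_filter, Set.mem_setOf_eq, List.mem_toFinset] at hx hy
      exact List.inj_on_of_nodup_map hf hx.1 hy.1 hxy
    have h1 := Finset.card_image_of_injOn hinj
    have h2 : Finset.image f (w.edges.toFinset.filter (fun e => f e = v))
        = (w.edges.map f).toFinset.filter (fun x => x = v) := by
      ext x
      simp only [Finset.mem_image, Finset.mem_filter, List.mem_toFinset, List.mem_map]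
      constructor
      · rintro ⟨e, ⟨he, hev⟩, rfl⟩; exact ⟨⟨e, he, rfl⟩, hev⟩
      · rintro ⟨⟨e, he, rfl⟩, hev⟩; exact ⟨e, ⟨he, hev⟩, rfl⟩
    rw [← h1, h2, Finset.filter_eq']
    split_ifs with hmem hm2 hm2
    · simp
    · exact absurd (List.mem_toFinset.mp hmem) hm2
    · exact absurd (List.mem_toFinset.mpr hm2) hmem
    · simp
  constructor
  · have hmt := tails_eq_aux X w.edges w.ne a w.first w.chain
    have hnd' : (w.edges.map X.tail).Nodup := by
      rw [hmt]
      exact List.Nodup.sublist (List.dropLast_sublist _) hnd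
    have := key X.tail hnd'
    rwa [hmt] at this
  · exact key X.head (List.nodup_cons.mp hnd).2

lemma walk_count_facts (X : Multigraph V E) {a b : V} (w : X.Walk a b)
    (hnd : (a :: w.edges.map X.head).Nodup) (hab : a ≠ b) :
    (w.edges.toFinset.filter (fun e => X.tail e = a)).card = 1 ∧
    (w.edges.toFinset.filter (fun e => X.head e = a)).card = 0 ∧
    (w.edges.toFinset.filter (fun e => X.head e = b)).card = 1 ∧
    (w.edges.toFinset.filter (fun e => X.tail e = b)).card = 0 ∧
    ∀ v, v ≠ a → v ≠ b → (w.edges.toFinset.filter (fun e => X.tail e = v)).card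
        = (w.edges.toFinset.filter (fun e => X.head e = v)).card := by
  have hMne : (w.edges.map X.head) ≠ [] := by simp [w.ne]
  have hgl : (w.edges.map X.head).getLast hMne = b := by
    have h1 : (w.edges.map X.head).getLast? = some (X.head (w.edges.getLast w.ne)) := by
      rw [List.getLast?_map, List.getLast?_eq_getLast w.ne]
      rfl
    rw [List.getLast?_eq_getLast hMne] at h1
    rw [Option.some_inj.mp h1, w.last]
  have hsplit : (w.edges.map X.head).dropLast ++ [b] = (w.edges.map X.head) := by
    conv_rhs => rw [← List.dropLast_concat_getLast hMne]
    rw [hgl]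
  have hndM : (w.edges.map X.head).Nodup := (List.nodup_cons.mp hnd).2
  have hanotM : a ∉ (w.edges.map X.head) := (List.nodup_cons.mp hnd).1
  have hbdrop : b ∉ (w.edges.map X.head).dropLast := by
    have h2 : ((w.edges.map X.head).dropLast ++ [b]).Nodup := by rw [hsplit]; exact hndM
    have := (List.nodup_append.mp h2).2.2
    intro hb
    exact this b hb b (by simp) rfl
  have hdl : (a :: (w.edges.map X.head)).dropLast = a :: (w.edges.map X.head).dropLast := by
    cases hM2 : w.edges.map X.head with
    | nil => exact absurd hM2 hMne
    | cons x xs => rw [List.dropLast_cons₂]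
  refine ⟨?_, ?_, ?_, ?_, ?_⟩
  · rw [(walk_filter_card X w hnd a).1, hdl, if_pos (by simp)]
  · rw [(walk_filter_card X w hnd a).2, if_neg hanotM]
  · rw [(walk_filter_card X w hnd b).2, if_pos (by rw [← hsplit]; simp)]
  · rw [(walk_filter_card X w hnd b).1, hdl, if_neg (by simp [hab.symm, hbdrop])]
  · intro v hva hvb
    rw [(walk_filter_card X w hnd v).1, (walk_filter_card X w hnd v).2, hdl]
    have : v ∈ a :: (w.edges.map X.head).dropLast ↔ v ∈ (w.edges.map X.head) := by
      rw [← hsplit]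
      simp [hva, hvb]
    rw [if_congr this rfl rfl]

end Counts



section Flow
variable {V E : Type} [Fintype E] [DecidableEq V] [DecidableEq E]

def inC (X : Multigraph V E) (F : Finset E) (v : V) : ℕ :=
  (F.filter (fun e => X.head e = v)).card

def outC (X : Multigraph V E) (F : Finset E) (v : V) : ℕ :=
  (F.filter (fun e => X.tail e = v)).card

def GoodFlow (X : Multigraph V E) (a b : V) (F : Finset E) : Prop :=
  (∀ v, v ≠ a → v ≠ b → inC X F v = outC X F v) ∧ inC X F a = 0 ∧ outC X F b = 0

def resid (X : Multigraph V E) (F : Finset E) : Multigraph V E :=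
  ⟨fun e => if e ∈ F then X.head e else X.tail e, fun e => if e ∈ F then X.tail e else X.head e⟩

lemma card_filter_split {F : Finset E} (p q : E → Prop) [DecidablePred p] [DecidablePred q] :
    (F.filter p).card = (F.filter (fun e => p e ∧ q e)).card
      + (F.filter (fun e => p e ∧ ¬ q e)).card := by
  rw [← Finset.filter_filter, ← Finset.filter_filter]
  exact (Finset.card_filter_add_card_filter_not (s := F.filter p) q).symm

lemma cut_of_no_aug [Fintype V] (X : Multigraph V E) (a b : V) (hab : a ≠ b) (F : Finset E)
    (hF : GoodFlow X a b F) (hno : ¬ Nonempty ((X.resid F).Walk a b)) :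
    ∃ S : Finset V, a ∈ S ∧ b ∉ S ∧ (X.cutE S).card = outC X F a := by
  classical
  set S := Finset.univ.filter (fun v => v = a ∨ Nonempty ((X.resid F).Walk a v)) with hS
  have haS : a ∈ S := by simp [hS]
  have hreach : ∀ v ∈ S, ∀ e, (X.resid F).tail e = v → (X.resid F).head e ∈ S := by
    intro v hv e he
    simp only [hS, Finset.mem_filter, Finset.mem_univ, true_and] at hv ⊢
    right
    rcases hv with rfl | hw
    · exact ⟨Walk.single e he rfl⟩
    · exact ⟨hw.some.concat e he⟩
  have hbS : b ∉ S := by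
    simp only [hS, Finset.mem_filter, Finset.mem_univ, true_and]
    rintro (rfl | hw)
    · exact hab rfl
    · exact hno hw
  have claim1 : ∀ e, X.tail e ∈ S → X.head e ∉ S → e ∈ F := by
    intro e h1 h2
    by_contra heF
    have := hreach _ h1 e (by simp [resid, heF])
    simp only [resid, if_neg heF] at this
    exact h2 this
  have claim2 : ∀ e ∈ F, X.head e ∈ S → X.tail e ∈ S := by
    intro e heF h1
    have := hreach _ h1 e (by simp [resid, heF])
    simpa [resid, heF] using this
  -- counting
  have key : ∀ (f : E → V), (F.filter (fun e => f e ∈ S)).card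
      = ∑ v ∈ S, (F.filter (fun e => f e = v)).card := by
    intro f
    rw [Finset.card_eq_sum_card_fiberwise
      (s := F.filter (fun e => f e ∈ S)) (f := f) (t := S) (fun e he => (Finset.mem_filter.mp he).2)]
    apply Finset.sum_congr rfl
    intro v hv
    congr 1
    ext e
    simp only [Finset.mem_filter]
    constructor
    · rintro ⟨⟨he, _⟩, h2⟩; exact ⟨he, h2⟩
    · rintro ⟨he, h2⟩; exact ⟨⟨he, h2 ▸ hv⟩, h2⟩
  have hsum : ∑ v ∈ S, (F.filter (fun e => X.tail e = v)).card
      = outC X F a + ∑ v ∈ S, (F.filter (fun e => X.head e = v)).card := by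
    have hA := Finset.add_sum_erase S (fun v => (F.filter (fun e => X.tail e = v)).card) haS
    have hB := Finset.add_sum_erase S (fun v => (F.filter (fun e => X.head e = v)).card) haS
    have hC : ∀ v ∈ S.erase a, (F.filter (fun e => X.head e = v)).card
        = (F.filter (fun e => X.tail e = v)).card := by
      intro v hv
      have hva : v ≠ a := (Finset.mem_erase.mp hv).1
      have hvb : v ≠ b := fun h => hbS (h ▸ (Finset.mem_erase.mp hv).2)
      exact hF.1 v hva hvb
    have hD := Finset.sum_congr rfl hC
    have h0 : (F.filter (fun e => X.head e = a)).card = 0 := hF.2.1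
    simp only [inC, outC] at *
    omega
  have hTS : (F.filter (fun e => X.tail e ∈ S)).card
      = (F.filter (fun e => X.tail e ∈ S ∧ X.head e ∈ S)).card
        + (F.filter (fun e => X.tail e ∈ S ∧ X.head e ∉ S)).card :=
    card_filter_split _ _
  have hHS : (F.filter (fun e => X.head e ∈ S)).card
      = (F.filter (fun e => X.head e ∈ S ∧ X.tail e ∈ S)).card
        + (F.filter (fun e => X.head e ∈ S ∧ X.tail e ∉ S)).card :=
    card_filter_split _ _
  have hzero : (F.filter (fun e => X.head e ∈ S ∧ X.tail e ∉ S)).card = 0 := by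
    rw [Finset.card_eq_zero]
    rw [Finset.filter_eq_empty_iff]
    intro e he
    push_neg
    intro h1
    exact claim2 e he h1
  have hcomm : (F.filter (fun e => X.tail e ∈ S ∧ X.head e ∈ S)).card
      = (F.filter (fun e => X.head e ∈ S ∧ X.tail e ∈ S)).card := by
    congr 1
    ext e
    simp only [Finset.mem_filter]
    tauto
  have hcutF : X.cutE S = F.filter (fun e => X.tail e ∈ S ∧ X.head e ∉ S) := by
    ext e
    simp only [cutE, Finset.mem_filter, Finset.mem_univ, true_and]
    constructor
    · rintro ⟨h1, h2⟩; exact ⟨claim1 e h1 h2, h1, h2⟩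
    · rintro ⟨_, h1, h2⟩; exact ⟨h1, h2⟩
  refine ⟨S, haS, hbS, ?_⟩
  rw [hcutF]
  rw [key X.tail, key X.head] at *
  omega

lemma augment_s14 (X : Multigraph V E) (a b : V) (hab : a ≠ b) (F : Finset E)
    (hF : GoodFlow X a b F) (w : (X.resid F).Walk a b)
    (hnd : (a :: w.edges.map (X.resid F).head).Nodup) :
    ∃ F' : Finset E, GoodFlow X a b F' ∧ outC X F' a = outC X F a + 1 := by
  classical
  set W := w.edges.toFinset with hW
  set F' := (F \ W) ∪ (W \ F) with hF'
  -- decomposition of filters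
  have hFsplit : ∀ (p : E → Prop) [DecidablePred p], (F.filter p).card
      = ((F \ W).filter p).card + (W.filter (fun e => e ∈ F ∧ p e)).card := by
    intro p _
    have h1 : F.filter p = ((F \ W).filter p) ∪ ((W.filter (fun e => e ∈ F ∧ p e))) := by
      ext e
      simp only [Finset.mem_union, Finset.mem_filter, Finset.mem_sdiff]
      by_cases heW : e ∈ W <;> tauto
    rw [h1, Finset.card_union_of_disjoint]
    rw [Finset.disjoint_left]
    intro e he hee
    simp only [Finset.mem_filter, Finset.mem_sdiff] at he hee
    exact he.1.2 hee.1
  have hF'split : ∀ (p : E → Prop) [DecidablePred p], (F'.filter p).card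
      = ((F \ W).filter p).card + (W.filter (fun e => e ∉ F ∧ p e)).card := by
    intro p _
    have h1 : F'.filter p = ((F \ W).filter p) ∪ ((W.filter (fun e => e ∉ F ∧ p e))) := by
      ext e
      simp only [hF', Finset.mem_union, Finset.mem_filter, Finset.mem_sdiff]
      tauto
    rw [h1, Finset.card_union_of_disjoint]
    rw [Finset.disjoint_left]
    intro e he hee
    simp only [Finset.mem_filter, Finset.mem_sdiff] at he hee
    exact hee.2.1 he.1.1
  -- residual counts
  have hres : ∀ v, ((W.filter (fun e => (X.resid F).head e = v)).card
        = (W.filter (fun e => e ∈ F ∧ X.tail e = v)).card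
          + (W.filter (fun e => e ∉ F ∧ X.head e = v)).card)
      ∧ ((W.filter (fun e => (X.resid F).tail e = v)).card
        = (W.filter (fun e => e ∈ F ∧ X.head e = v)).card
          + (W.filter (fun e => e ∉ F ∧ X.tail e = v)).card) := by
    intro v
    constructor
    · have h1 : W.filter (fun e => (X.resid F).head e = v)
          = (W.filter (fun e => e ∈ F ∧ X.tail e = v))
            ∪ (W.filter (fun e => e ∉ F ∧ X.head e = v)) := by
        ext e
        by_cases heF : e ∈ F <;> simp only [Finset.mem_filter, Finset.mem_union] <;> simp [resid, heF]
      rw [h1, Finset.card_union_of_disjoint]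
      rw [Finset.disjoint_left]
      intro e he hee
      simp only [Finset.mem_filter] at he hee
      exact hee.2.1 he.2.1
    · have h1 : W.filter (fun e => (X.resid F).tail e = v)
          = (W.filter (fun e => e ∈ F ∧ X.head e = v))
            ∪ (W.filter (fun e => e ∉ F ∧ X.tail e = v)) := by
        ext e
        by_cases heF : e ∈ F <;> simp only [Finset.mem_filter, Finset.mem_union] <;> simp [resid, heF]
      rw [h1, Finset.card_union_of_disjoint]
      rw [Finset.disjoint_left]
      intro e he hee
      simp only [Finset.mem_filter] at he hee
      exact hee.2.1 he.2.1
  have hcnt := walk_count_facts (X.resid F) w hnd hab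
  simp only [← hW] at hcnt
  -- bounds
  have hble : ∀ (p : E → Prop) [DecidablePred p],
      (W.filter (fun e => e ∈ F ∧ p e)).card ≤ (F.filter p).card := by
    intro p _
    apply Finset.card_le_card
    intro e he
    simp only [Finset.mem_filter] at he ⊢
    exact ⟨he.2.1, he.2.2⟩
  refine ⟨F', ⟨?_, ?_, ?_⟩, ?_⟩
  · intro v hva hvb
    have e1 := hFsplit (fun e => X.head e = v)
    have e2 := hFsplit (fun e => X.tail e = v)
    have e3 := hF'split (fun e => X.head e = v)
    have e4 := hF'split (fun e => X.tail e = v)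
    have e5 := (hres v).1
    have e6 := (hres v).2
    have e7 := hcnt.2.2.2.2 v hva hvb
    have e8 := hF.1 v hva hvb
    simp only [inC, outC] at *
    omega
  · have e1 := hFsplit (fun e => X.head e = a)
    have e3 := hF'split (fun e => X.head e = a)
    have e5 := (hres a).1
    have e7 := hcnt.2.1
    have e8 := hF.2.1
    simp only [inC, outC] at *
    omega
  · have e2 := hFsplit (fun e => X.tail e = b)
    have e4 := hF'split (fun e => X.tail e = b)
    have e6 := (hres b).2
    have e7 := hcnt.2.2.2.1
    have e8 := hF.2.2
    simp only [inC, outC] at *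
    omega
  · have e2 := hFsplit (fun e => X.tail e = a)
    have e4 := hF'split (fun e => X.tail e = a)
    have e6 := (hres a).2
    have e5 := (hres a).1
    have e7 := hcnt.1
    have e9 := hcnt.2.1
    have e10 := hble (fun e => X.head e = a)
    have e8 := hF.2.1
    simp only [inC, outC] at *
    omega

end Flow

section Simplify
open List
variable {V E : Type}

def Walk.mk' {X : Multigraph V E} {a b : V} (L : List E) (hne : L ≠ [])
    (h1 : ∀ x ∈ L.head?, X.tail x = a) (h2 : ∀ x ∈ L.getLast?, X.head x = b)
    (h3 : L.Chain' (fun e f => X.head e = X.tail f)) : X.Walk a b :=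
  ⟨L, hne, h1 _ (by rw [head?_eq_head hne]; rfl),
    h2 _ (by rw [getLast?_eq_getLast hne]; rfl), h3⟩

@[simp] lemma Walk.mk'_edges {X : Multigraph V E} {a b : V} (L : List E) (hne : L ≠ [])
    (h1 : ∀ x ∈ L.head?, X.tail x = a) (h2 : ∀ x ∈ L.getLast?, X.head x = b)
    (h3 : L.Chain' (fun e f => X.head e = X.tail f)) :
    (Walk.mk' L hne h1 h2 h3).edges = L := rfl

lemma Walk.first' {X : Multigraph V E} {a b : V} (w : X.Walk a b) :
    ∀ x ∈ w.edges.head?, X.tail x = a := by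
  intro x hx
  rw [head?_eq_head w.ne] at hx
  cases hx
  exact w.first

lemma Walk.last' {X : Multigraph V E} {a b : V} (w : X.Walk a b) :
    ∀ x ∈ w.edges.getLast?, X.head x = b := by
  intro x hx
  rw [getLast?_eq_getLast w.ne] at hx
  cases hx
  exact w.last

lemma dup_decomp {α β : Type} : ∀ (l : List α) (f : α → β), ¬ (l.map f).Nodup →
    ∃ (l₁ : List α) (e : α) (l₂ : List α) (g : α) (l₃ : List α),
      l = l₁ ++ e :: l₂ ++ g :: l₃ ∧ f e = f g := by
  intro l
  induction l with
  | nil => intro f h; simp at h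
  | cons x r ih =>
    intro f h
    by_cases hx : f x ∈ r.map f
    · obtain ⟨g, hg, hfg⟩ := List.mem_map.mp hx
      obtain ⟨r₁, r₂, rfl⟩ := List.append_of_mem hg
      exact ⟨[], x, r₁, g, r₂, by simp, hfg.symm⟩
    · have h' : ¬ (r.map f).Nodup := by
        simp only [List.map_cons, List.nodup_cons] at h
        tauto
      obtain ⟨l₁, e, l₂, g, l₃, rfl, hfg⟩ := ih f h'
      exact ⟨x :: l₁, e, l₂, g, l₃, by simp, hfg⟩

lemma exists_simple_walk {X : Multigraph V E} {a b : V} (hab : a ≠ b) (w : X.Walk a b) :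
    ∃ w' : X.Walk a b, (a :: w'.edges.map X.head).Nodup ∧ ∀ e ∈ w'.edges, e ∈ w.edges := by
  classical
  suffices H : ∀ n (w : X.Walk a b), w.edges.length ≤ n →
      ∃ w' : X.Walk a b, (a :: w'.edges.map X.head).Nodup ∧ ∀ e ∈ w'.edges, e ∈ w.edges by
    exact H w.edges.length w le_rfl
  intro n
  induction n with
  | zero =>
    intro w h
    exact absurd (List.length_eq_zero_iff.mp (Nat.le_zero.mp h)) w.ne
  | succ n ih =>
    intro w hlen
    by_cases hbcase : ∃ l₁ e l₂, w.edges = l₁ ++ e :: l₂ ∧ X.head e = b ∧ l₂ ≠ []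
    · obtain ⟨l₁, e, l₂, hw, heb, hl₂⟩ := hbcase
      have hne : (l₁ ++ [e] : List E) ≠ [] := by simp
      have hch : (l₁ ++ [e]).Chain' (fun e f => X.head e = X.tail f) :=
        (hw ▸ w.chain).prefix ⟨l₂, by simp⟩
      have h1 : ∀ x ∈ (l₁ ++ [e]).head?, X.tail x = a := by
        intro x hx
        apply w.first' x
        rw [hw, List.head?_append]
        rw [List.head?_append] at hx
        cases l₁ with
        | nil => simp at hx ⊢; exact hx
        | cons y ys => simpa using hx
      have h2 : ∀ x ∈ (l₁ ++ [e]).getLast?, X.head x = b := by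
        intro x hx
        rw [List.getLast?_append] at hx
        simp only [List.getLast?_singleton, Option.mem_def] at hx
        cases hx
        exact heb
      obtain ⟨w', hnd, hsub⟩ := ih (Walk.mk' (l₁ ++ [e]) hne h1 h2 hch) (by
        have hlw := congrArg List.length hw
        have := List.length_pos_iff.mpr hl₂
        simp only [Walk.mk'_edges]
        simp at hlw ⊢
        omega)
      refine ⟨w', hnd, fun x hx => ?_⟩
      have hx2 := hsub x hx
      simp only [Walk.mk'_edges] at hx2
      rw [hw]
      simp only [List.mem_append, List.mem_cons] at hx2 ⊢
      tauto
    · by_cases hacase : ∃ l₁ e l₂, w.edges = l₁ ++ e :: l₂ ∧ X.head e = a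
      · obtain ⟨l₁, e, l₂, hw, hea⟩ := hacase
        have hl₂ : l₂ ≠ [] := by
          rintro rfl
          have hb : X.head e = b := by
            apply w.last' e
            rw [hw, List.getLast?_append]
            simp
          exact hab (hea ▸ hb ▸ rfl)
        have hsplit := (List.isChain_split.mp (hw ▸ w.chain)).2
        have hch : l₂.Chain' (fun e f => X.head e = X.tail f) :=
          (List.isChain_cons.mp hsplit).2
        have h1 : ∀ x ∈ l₂.head?, X.tail x = a := by
          intro x hx
          have := (List.isChain_cons.mp hsplit).1 x hx
          rw [← this, hea]
        have h2 : ∀ x ∈ l₂.getLast?, X.head x = b := by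
          intro x hx
          apply w.last' x
          simp only [Option.mem_def] at hx
          rw [hw, ← List.singleton_append, List.getLast?_append, List.getLast?_append, hx]
          rfl
        obtain ⟨w', hnd, hsub⟩ := ih (Walk.mk' l₂ hl₂ h1 h2 hch) (by
          have hlw := congrArg List.length hw
          simp only [Walk.mk'_edges]
          simp at hlw ⊢
          omega)
        refine ⟨w', hnd, fun x hx => ?_⟩
        have hx2 := hsub x hx
        simp only [Walk.mk'_edges] at hx2
        rw [hw]
        simp only [List.mem_append, List.mem_cons]
        tauto
      · by_cases hdup : (w.edges.map X.head).Nodup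
        · refine ⟨w, ?_, fun e he => he⟩
          rw [List.nodup_cons]
          refine ⟨fun hmem => ?_, hdup⟩
          obtain ⟨e, he, hea⟩ := List.mem_map.mp hmem
          obtain ⟨l₁, l₂, hw⟩ := List.append_of_mem he
          exact hacase ⟨l₁, e, l₂, hw, hea⟩
        · obtain ⟨l₁, e, l₂, g, l₃, hw, hfg⟩ := dup_decomp w.edges X.head hdup
          have hl₃ : l₃ ≠ [] := by
            rintro rfl
            have hgl : X.head g = b := by
              apply w.last' g
              rw [hw, List.getLast?_append, ← List.singleton_append,
                List.getLast?_append, List.getLast?_append]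
              simp
            refine hbcase ⟨l₁, e, l₂ ++ [g], by rw [hw]; simp, by rw [hfg, hgl], by simp⟩
          have hne : (l₁ ++ e :: l₃ : List E) ≠ [] := by simp
          have h1 : ∀ x ∈ (l₁ ++ e :: l₃).head?, X.tail x = a := by
            intro x hx
            apply w.first' x
            rw [hw, List.head?_append]
            rw [List.head?_append] at hx
            cases l₁ with
            | nil => simp at hx ⊢; exact hx
            | cons y ys => simpa using hx
          have h2 : ∀ x ∈ (l₁ ++ e :: l₃).getLast?, X.head x = b := by
            intro x hx
            apply w.last' x
            rw [← List.singleton_append, List.getLast?_append, List.getLast?_append] at hx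
            rw [hw, List.getLast?_append, ← List.singleton_append, List.getLast?_append,
              List.getLast?_append]
            rcases hl₃' : l₃.getLast? with _ | y
            · exact absurd (List.getLast?_eq_none_iff.mp hl₃') hl₃
            · rw [hl₃'] at hx
              simpa using hx
          have hchain0 := hw ▸ w.chain
          have hs1 : (l₁ ++ e :: (l₂ ++ g :: l₃)).Chain' (fun e f => X.head e = X.tail f) := by
            simpa using hchain0
          have hs2 : Chain' (fun e f => X.head e = X.tail f) (l₁ ++ [e]) ∧
              Chain' (fun e f => X.head e = X.tail f) (e :: (l₂ ++ g :: l₃)) :=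
            List.isChain_split.mp hs1
          have hs3 : Chain' (fun e f => X.head e = X.tail f) ((e :: l₂) ++ [g]) ∧
              Chain' (fun e f => X.head e = X.tail f) (g :: l₃) := by
            apply List.isChain_split.mp
            simpa [List.Chain'] using hs2.2
          have hchg := List.isChain_cons.mp hs3.2
          have hch : (l₁ ++ e :: l₃).Chain' (fun e f => X.head e = X.tail f) := by
            apply List.isChain_split.mpr
            refine ⟨hs2.1, List.isChain_cons.mpr ⟨fun y hy => ?_, hchg.2⟩⟩
            rw [hfg]
            exact hchg.1 y hy
          obtain ⟨w', hnd, hsub⟩ := ih (Walk.mk' (l₁ ++ e :: l₃) hne h1 h2 hch) (by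
            have hlw := congrArg List.length hw
            simp only [Walk.mk'_edges]
            simp at hlw ⊢
            omega)
          refine ⟨w', hnd, fun x hx => ?_⟩
          have hx2 := hsub x hx
          simp only [Walk.mk'_edges] at hx2
          rw [hw]
          simp only [List.mem_append, List.mem_cons] at hx2 ⊢
          tauto

end Simplify

section MaxFlow
open List
variable {V E : Type} [Fintype V] [Fintype E] [DecidableEq V] [DecidableEq E]

lemma flow_exists (X : Multigraph V E) (a b : V) (hab : a ≠ b) (k : ℕ)
    (hcut : ∀ S : Finset V, a ∈ S → b ∉ S → k ≤ (X.cutE S).card) :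
    ∃ F : Finset E, GoodFlow X a b F ∧ outC X F a = k := by
  induction k with
  | zero => exact ⟨∅, ⟨fun v _ _ => by simp [inC, outC], by simp [inC], by simp [outC]⟩,
      by simp [outC]⟩
  | succ k ih =>
    obtain ⟨F, hF, hval⟩ := ih (fun S ha hb => le_trans (Nat.le_succ k) (hcut S ha hb))
    by_cases hw : Nonempty ((X.resid F).Walk a b)
    · obtain ⟨w0⟩ := hw
      obtain ⟨w, hnd, -⟩ := exists_simple_walk hab w0
      obtain ⟨F', hF', hval'⟩ := augment_s14 X a b hab F hF w hnd
      exact ⟨F', hF', by rw [hval', hval]⟩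
    · obtain ⟨S, haS, hbS, hcard⟩ := cut_of_no_aug X a b hab F hF hw
      have := hcut S haS hbS
      omega

lemma follow (X : Multigraph V E) (hacyc : X.Acyclic) (a b : V) (F : Finset E)
    (hcons : ∀ v, v ≠ a → v ≠ b → inC X F v = outC X F v) (hina : inC X F a = 0) :
    ∀ v, (∃ e ∈ F, X.tail e = v) → ∃ w : X.Walk v b, ∀ e ∈ w.edges, e ∈ F := by
  have hwf : WellFounded (flip X.edgeRel) := by
    apply Subrelation.wf (r := X.op.edgeRel)
    · rintro x y ⟨e, h1, h2⟩
      exact ⟨e, h2, h1⟩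
    · exact wf_edgeRel (op_acyclic hacyc)
  intro v
  induction v using WellFounded.induction hwf with
  | _ v ih =>
  rintro ⟨e, heF, rfl⟩
  by_cases hub : X.head e = b
  · refine ⟨Walk.single e rfl hub, fun x hx => ?_⟩
    simp only [Walk.single, List.mem_singleton] at hx
    exact hx ▸ heF
  · have hua : X.head e ≠ a := by
      intro h
      have : e ∈ F.filter (fun e => X.head e = a) := Finset.mem_filter.mpr ⟨heF, h⟩
      rw [Finset.card_eq_zero.mp hina] at this
      exact absurd this (Finset.notMem_empty e)
    have hin1 : 0 < inC X F (X.head e) :=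
      Finset.card_pos.mpr ⟨e, Finset.mem_filter.mpr ⟨heF, rfl⟩⟩
    have hout1 : 0 < outC X F (X.head e) := by
      rw [← hcons _ hua hub]; exact hin1
    obtain ⟨e', he'⟩ := Finset.card_pos.mp hout1
    have he2 := Finset.mem_filter.mp he'
    obtain ⟨w, hw⟩ := ih (X.head e) ⟨e, rfl, rfl⟩ ⟨e', he2.1, he2.2⟩
    refine ⟨Walk.cons e w rfl, ?_⟩
    intro x hx
    simp only [Walk.cons, List.mem_cons] at hx
    rcases hx with rfl | hx
    · exact heF
    · exact hw x hx

lemma decompose_s14 (X : Multigraph V E) (hacyc : X.Acyclic) (a b : V) (hab : a ≠ b) :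
    ∀ (F : Finset E), GoodFlow X a b F →
    ∃ P : Fin (outC X F a) → X.Walk a b,
      (∀ i, ∀ e ∈ (P i).edges, e ∈ F) ∧
      ∀ i j, i ≠ j → (P i).edgeSet ∩ (P j).edgeSet = ∅ := by
  intro F
  induction F using Finset.strongInductionOn with
  | _ F IH =>
  intro hF
  rcases hn : outC X F a with _ | n
  · exact ⟨fun i => i.elim0, fun i => i.elim0, fun i => i.elim0⟩
  · have hpos : 0 < outC X F a := by omega
    obtain ⟨e0, he0⟩ := Finset.card_pos.mp hpos
    have he0' := Finset.mem_filter.mp he0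
    obtain ⟨w, hwF⟩ := follow X hacyc a b F hF.1 hF.2.1 a ⟨e0, he0'.1, he0'.2⟩
    have hsimple := w.isSimple_of_acyclic hacyc
    have hcnt := walk_count_facts X w hsimple hab
    set W := w.edges.toFinset with hWdef
    have hWF : W ⊆ F := fun x hx => hwF x (List.mem_toFinset.mp hx)
    set F' := F \ W with hF'def
    have hsd : ∀ (p : E → Prop), ∀ (_ : DecidablePred p), (F'.filter p).card + (W.filter p).card
        = (F.filter p).card := by
      intro p _
      have h1 : F'.filter p = (F.filter p) \ (W.filter p) := by
        ext x
        simp only [hF'def, Finset.mem_filter, Finset.mem_sdiff]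
        tauto
      rw [h1]
      apply Finset.card_sdiff_add_card_eq_card
      exact Finset.filter_subset_filter p hWF
    have hflow' : GoodFlow X a b F' := by
      refine ⟨fun v hva hvb => ?_, ?_, ?_⟩
      · have h1 := hsd (fun e => X.head e = v) (by infer_instance)
        have h2 := hsd (fun e => X.tail e = v) (by infer_instance)
        have h3 := hcnt.2.2.2.2 v hva hvb
        have h4 := hF.1 v hva hvb
        simp only [inC, outC] at *
        omega
      · have h1 := hsd (fun e => X.head e = a) (by infer_instance)
        have h2 := hF.2.1
        simp only [inC, outC] at *
        omega
      · have h1 := hsd (fun e => X.tail e = b) (by infer_instance)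
        have h2 := hF.2.2
        have h3 := hcnt.2.2.2.1
        simp only [inC, outC] at *
        omega
    have hval' : outC X F' a = n := by
      have h1 := hsd (fun e => X.tail e = a) (by infer_instance)
      have h2 := hcnt.1
      simp only [inC, outC] at *
      omega
    have hss : F' ⊂ F := by
      refine ⟨Finset.sdiff_subset, fun hsub => ?_⟩
      have he : w.edges.head w.ne ∈ W := List.mem_toFinset.mpr (List.head_mem w.ne)
      have heF : w.edges.head w.ne ∈ F := hWF he
      have := hsub heF
      rw [hF'def, Finset.mem_sdiff] at this
      exact this.2 he
    obtain ⟨P', hsub', hdisj'⟩ := IH F' hss hflow'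
    refine ⟨fun i => if h : i = 0 then w else P' (Fin.cast hval'.symm (i.pred h)), ?_, ?_⟩
    · intro i x hx
      by_cases h : i = 0
      · simp only [h, dif_pos] at hx
        exact hwF x hx
      · simp only [dif_neg h] at hx
        exact Finset.sdiff_subset (hsub' _ x hx)
    · intro i j hij
      have key : ∀ (u : X.Walk a b), (∀ e ∈ u.edges, e ∈ F') →
          w.edgeSet ∩ u.edgeSet = ∅ := by
        intro u hu
        ext x
        simp only [Walk.edgeSet, Set.mem_inter_iff, Set.mem_setOf_eq, Set.mem_empty_iff_false,
          iff_false, not_and]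
        intro hxw hxu
        have h1 := hu x hxu
        rw [hF'def, Finset.mem_sdiff] at h1
        exact h1.2 (List.mem_toFinset.mpr hxw)
      by_cases hi : i = 0
      · by_cases hj : j = 0
        · exact absurd (hi.trans hj.symm) hij
        · simp only [hi, dif_pos, dif_neg hj]
          exact key _ (hsub' _)
      · by_cases hj : j = 0
        · simp only [hj, dif_pos, dif_neg hi]
          rw [Set.inter_comm]
          exact key _ (hsub' _)
        · simp only [dif_neg hi, dif_neg hj]
          apply hdisj'
          intro hpred
          apply hij
          have := congrArg (Fin.cast hval') hpred
          simp only [Fin.cast_cast, Fin.cast_eq_self] at this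
          have h2 : i.pred hi = j.pred hj := by
            apply Fin.cast_injective hval'.symm
            exact hpred
          rw [← Fin.succ_pred i hi, ← Fin.succ_pred j hj, h2]

lemma menger (X : Multigraph V E) (hacyc : X.Acyclic) (a b : V) (hab : a ≠ b) (k : ℕ)
    (hcut : ∀ S : Finset V, a ∈ S → b ∉ S → k ≤ (X.cutE S).card) :
    ∃ P : Fin k → X.Walk a b, ∀ i j, i ≠ j → (P i).edgeSet ∩ (P j).edgeSet = ∅ := by
  obtain ⟨F, hF, hval⟩ := flow_exists X a b hab k hcut
  obtain ⟨P, _, hdisj⟩ := decompose_s14 X hacyc a b hab F hF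
  refine ⟨fun i => P (Fin.cast hval.symm i), fun i j hij => ?_⟩
  apply hdisj
  intro h
  exact hij (Fin.cast_injective hval.symm h)

end MaxFlow



section Broadcast
open List
variable {V E : Type} [Fintype V] [Fintype E] [DecidableEq V]

lemma indeg_eq (G : Multigraph V E) (s : V) (d : ℕ) (v : V) (hv : v ≠ s)
    (hdiv : G.diversity s v = d)
    (hpar : ∀ e e' : E, G.tail e ≠ s → G.tail e = G.tail e' →
      G.head e = G.head e' → e = e') : G.indeg v = d := by
  classical
  have hsplit : G.indeg v
      = (Finset.univ.filter (fun e : E => G.head e = v ∧ G.tail e ≠ s)).card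
        + (Finset.univ.filter (fun e : E => G.head e = v ∧ ¬ G.tail e ≠ s)).card :=
    card_filter_split _ _
  have h2 : (Finset.univ.filter (fun e : E => G.head e = v ∧ ¬ G.tail e ≠ s)).card
      = (Finset.univ.filter (fun e : E => G.tail e = s ∧ G.head e = v)).card := by
    congr 1
    ext e
    simp only [Finset.mem_filter, Finset.mem_univ, true_and, not_not]
    tauto
  have h1 : (Finset.univ.filter (fun e : E => G.head e = v ∧ G.tail e ≠ s)).card
      = (Finset.univ.filter (fun u : V => u ≠ s ∧ ∃ e : E, G.tail e = u ∧ G.head e = v)).card := by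
    apply Finset.card_bij (fun e _ => G.tail e)
    · intro e he
      simp only [Finset.mem_filter, Finset.mem_univ, true_and] at he ⊢
      exact ⟨he.2, e, rfl, he.1⟩
    · intro e he e' he' hee
      simp only [Finset.mem_filter, Finset.mem_univ, true_and] at he he'
      exact hpar e e' he.2 hee (he.1.trans he'.1.symm)
    · intro u hu
      simp only [Finset.mem_filter, Finset.mem_univ, true_and] at hu
      obtain ⟨hus, e, het, heh⟩ := hu
      exact ⟨e, by simp only [Finset.mem_filter, Finset.mem_univ, true_and]
                   exact ⟨heh, het ▸ hus⟩, het⟩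
  rw [← hdiv]
  unfold diversity
  omega

lemma acyclic_of_potential {V' E' : Type} (X : Multigraph V' E') (φ : V' → ℕ)
    (h : ∀ e, φ (X.tail e) < φ (X.head e)) : X.Acyclic := by
  intro v
  constructor
  intro w
  have hch : (v :: w.edges.map X.head).Chain' (fun a b => φ a < φ b) := by
    show List.IsChain _ _; rw [List.isChain_cons]
    constructor
    · intro y hy
      rw [List.head?_map, List.head?_eq_head w.ne] at hy
      simp only [Option.map_some, Option.mem_def, Option.some_inj] at hy
      subst hy
      have h2 := h (w.edges.head w.ne)
      rwa [w.first] at h2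
    · rw [List.isChain_map]
      exact w.chain.imp (fun {e f} hef => by rw [hef]; exact h f)
  letI : IsTrans V' (fun a b => φ a < φ b) := ⟨fun _ _ _ => lt_trans⟩
  have hpw := (List.isChain_iff_pairwise).mp hch
  have hMne : w.edges.map X.head ≠ [] := by simp [w.ne]
  have hlast : (w.edges.map X.head).getLast hMne = v := by
    have h1 : (w.edges.map X.head).getLast? = some (X.head (w.edges.getLast w.ne)) := by
      rw [List.getLast?_map, List.getLast?_eq_getLast w.ne]
      rfl
    rw [List.getLast?_eq_getLast hMne] at h1
    rw [Option.some_inj.mp h1, w.last]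
  have hmem : v ∈ w.edges.map X.head := by
    have h2 := List.getLast_mem hMne
    rwa [hlast] at h2
  have := (List.pairwise_cons.mp hpw).1 v hmem
  omega

lemma broadcast_acyclic (G : Multigraph V E) (s : V) (hacyc : G.Acyclic) :
    (G.broadcast s).Acyclic := by
  apply acyclic_of_potential _
    (Sum.elim (fun v => 2 * G.pot v) (fun u => 2 * G.pot u.1 + 1))
  intro x
  cases x with
  | inl e =>
    have h := pot_lt hacyc e
    by_cases hts : G.tail e = s
    · simp only [broadcast, dif_pos hts, Sum.elim_inl]
      rw [← hts]
      omega
    · simp only [broadcast, dif_neg hts, Sum.elim_inl, Sum.elim_inr]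
      omega
  | inr u =>
    simp only [broadcast, Sum.elim_inl, Sum.elim_inr]
    omega

lemma broadcast_cut_bound (G : Multigraph V E) (s t : V) (d : ℕ) (hts : t ≠ s)
    (hacyc : G.Acyclic)
    (hdiv : ∀ v : V, v ≠ s → G.diversity s v = d)
    (hpar : ∀ e e' : E, G.tail e ≠ s → G.tail e = G.tail e' →
      G.head e = G.head e' → e = e')
    (S : Finset (V ⊕ {u : V // u ≠ s})) (hs : Sum.inl s ∈ S) (ht : Sum.inl t ∉ S) :
    d ≤ ((G.broadcast s).cutE S).card := by
  classical
  obtain ⟨v, hvW, hmin⟩ := (wf_edgeRel hacyc).has_min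
    {v : V | v ≠ s ∧ Sum.inl v ∉ S} ⟨t, hts, ht⟩
  obtain ⟨hvs, hvS⟩ := hvW
  have hindeg : G.indeg v = d := indeg_eq G s d v hvs (hdiv v hvs) hpar
  rw [← hindeg]
  unfold indeg
  apply Finset.card_le_card_of_injOn
    (fun e => if h : (G.broadcast s).tail (Sum.inl e) ∈ S then (Sum.inl e : E ⊕ {u : V // u ≠ s})
      else Sum.inr ⟨G.tail e, fun hes => h (by
        show (if h : G.tail e = s then (Sum.inl s : V ⊕ {u : V // u ≠ s})
          else Sum.inr ⟨G.tail e, h⟩) ∈ S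
        rw [dif_pos hes]
        exact hs)⟩)
  · intro e he
    simp only [Finset.coe_filter, Set.mem_setOf_eq, Finset.mem_filter, Finset.mem_univ, true_and] at he
    by_cases hc : (G.broadcast s).tail (Sum.inl e) ∈ S
    · simp only [dif_pos hc, cutE, Finset.mem_coe, Finset.mem_filter, Finset.mem_univ, true_and]
      refine ⟨hc, ?_⟩
      show Sum.inl (G.head e) ∉ S
      rw [he]
      exact hvS
    · simp only [dif_neg hc, cutE, Finset.mem_coe, Finset.mem_filter, Finset.mem_univ, true_and]
      have htes : G.tail e ≠ s := fun hes => by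
        simp only [broadcast, dif_pos hes] at hc
        exact hc hs
      constructor
      · show Sum.inl (G.tail e) ∈ S
        by_contra hnot
        exact hmin (G.tail e) ⟨htes, hnot⟩ ⟨e, rfl, he⟩
      · show Sum.inr _ ∉ S
        simp only [broadcast, dif_neg htes] at hc
        exact hc
  · intro e he e' he' heq
    simp only [Finset.coe_filter, Set.mem_setOf_eq, Finset.mem_univ, true_and] at he he'
    by_cases hc : (G.broadcast s).tail (Sum.inl e) ∈ S <;>
      by_cases hc' : (G.broadcast s).tail (Sum.inl e') ∈ S
    · simp only [dif_pos hc, dif_pos hc'] at heq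
      exact Sum.inl.inj heq
    · simp only [dif_pos hc, dif_neg hc'] at heq
      exact absurd heq (by simp)
    · simp only [dif_neg hc, dif_pos hc'] at heq
      exact absurd heq (by simp)
    · simp only [dif_neg hc, dif_neg hc'] at heq
      have h2 := Sum.inr.inj heq
      have h3 : G.tail e = G.tail e' := congrArg Subtype.val h2
      have htes : G.tail e ≠ s := fun hes => by
        simp only [broadcast, dif_pos hes] at hc
        exact hc hs
      exact hpar e e' htes h3 (he.trans he'.symm)

end Broadcast

section Transfer
open List
variable {V E : Type} [DecidableEq V]

lemma bfirst (G : Multigraph V E) (s : V) :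
    ∀ l : List (E ⊕ {u : V // u ≠ s}),
      l.Chain' (fun x y => (G.broadcast s).head x = (G.broadcast s).tail y) →
      ∀ f : E, (l.filterMap (Sum.elim some (fun _ => none))).head? = some f →
      ∃ hd, l.head? = some hd ∧
        Sum.elim (fun v => v = G.tail f) (fun u : {u : V // u ≠ s} => u.1 = G.tail f)
          ((G.broadcast s).tail hd) := by
  intro l
  induction l with
  | nil => intro _ f hf; simp at hf
  | cons x r ih =>
    intro hc f hf
    cases x with
    | inl e =>
      simp only [List.filterMap_cons, Sum.elim_inl, List.head?_cons, Option.some_inj] at hf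
      subst hf
      refine ⟨Sum.inl e, rfl, ?_⟩
      by_cases h : G.tail e = s
      · have h2 : (G.broadcast s).tail (Sum.inl e) = Sum.inl s := by
          simp [broadcast, h]
        rw [h2]
        simp only [Sum.elim_inl]
        exact h.symm
      · have h2 : (G.broadcast s).tail (Sum.inl e) = Sum.inr ⟨G.tail e, h⟩ := by
          simp [broadcast, h]
        rw [h2]
        simp only [Sum.elim_inr]
    | inr u =>
      simp only [List.filterMap_cons, Sum.elim_inr] at hf
      obtain ⟨hd₂, hr, hlep⟩ := ih (List.isChain_cons.mp hc).2 f hf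
      have hrel := (List.isChain_cons.mp hc).1 hd₂ hr
      refine ⟨Sum.inr u, rfl, ?_⟩
      have h2 : (G.broadcast s).tail (Sum.inr u) = Sum.inl u.1 := rfl
      rw [h2]
      simp only [Sum.elim_inl]
      have h3 : (G.broadcast s).tail hd₂ = Sum.inr u := hrel.symm
      rw [h3] at hlep
      simpa using hlep

lemma bchain (G : Multigraph V E) (s : V) :
    ∀ l : List (E ⊕ {u : V // u ≠ s}),
      l.Chain' (fun x y => (G.broadcast s).head x = (G.broadcast s).tail y) →
      (l.filterMap (Sum.elim some (fun _ => none))).Chain' (fun e f => G.head e = G.tail f) := by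
  intro l
  induction l with
  | nil => intro _; exact List.IsChain.nil
  | cons x r ih =>
    intro hc
    have hcr := (List.isChain_cons.mp hc).2
    cases x with
    | inr u => simp only [List.filterMap_cons, Sum.elim_inr]; exact ih hcr
    | inl e =>
      simp only [List.filterMap_cons, Sum.elim_inl]
      show List.IsChain _ _; rw [List.isChain_cons]
      refine ⟨?_, ih hcr⟩
      intro f hf
      obtain ⟨hd, hr, hlep⟩ := bfirst G s r hcr f hf
      have hrel := (List.isChain_cons.mp hc).1 hd hr
      have h3 : (G.broadcast s).tail hd = Sum.inl (G.head e) := hrel.symm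
      rw [h3] at hlep
      simpa using hlep

lemma binternals (G : Multigraph V E) (s : V) :
    ∀ l : List (E ⊕ {u : V // u ≠ s}),
      l.Chain' (fun x y => (G.broadcast s).head x = (G.broadcast s).tail y) →
      (∀ x ∈ l, (G.broadcast s).head x ≠ Sum.inl s) →
      ∀ e ∈ (l.filterMap (Sum.elim some (fun _ => none))).dropLast,
        ∃ u : {u : V // u ≠ s}, u.1 = G.head e ∧ Sum.inr u ∈ l := by
  intro l
  induction l with
  | nil => simp
  | cons x r ih =>
    intro hc hs e he
    have hcr := (List.isChain_cons.mp hc).2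
    cases x with
    | inr u =>
      simp only [List.filterMap_cons, Sum.elim_inr] at he
      obtain ⟨u', h1, h2⟩ := ih hcr (fun y hy => hs y (List.mem_cons_of_mem _ hy)) e he
      exact ⟨u', h1, List.mem_cons_of_mem _ h2⟩
    | inl e₀ =>
      simp only [List.filterMap_cons, Sum.elim_inl] at he
      rcases hgr : r.filterMap (Sum.elim some (fun _ => none)) with _ | ⟨g, gr⟩
      · rw [hgr] at he
        simp at he
      · rw [hgr, List.dropLast_cons₂] at he
        rcases List.mem_cons.mp he with rfl | he2
        · cases r with
          | nil => simp at hgr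
          | cons y r2 =>
            have hrel := (List.isChain_cons.mp hc).1 y rfl
            cases y with
            | inl f =>
              exfalso
              by_cases hfs : G.tail f = s
              · apply hs (Sum.inl e) (List.mem_cons_self)
                have h2 : (G.broadcast s).tail (Sum.inl f) = Sum.inl s := by
                  simp [broadcast, hfs]
                rw [← hrel] at h2
                exact h2
              · have h2 : (Sum.inl (G.head e) : V ⊕ {u : V // u ≠ s})
                    = Sum.inr ⟨G.tail f, hfs⟩ := by
                  have h3 : (G.broadcast s).tail (Sum.inl f) = Sum.inr ⟨G.tail f, hfs⟩ := by
                    simp [broadcast, hfs]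
                  rw [← h3]
                  exact hrel
                exact Sum.inl_ne_inr h2
            | inr u =>
              refine ⟨u, ?_, List.mem_cons_of_mem _ (List.mem_cons_self)⟩
              have h2 : (Sum.inl (G.head e) : V ⊕ {u : V // u ≠ s}) = Sum.inl u.1 := hrel
              exact (Sum.inl.inj h2).symm
        · obtain ⟨u', h1, h2⟩ := ih hcr (fun y hy => hs y (List.mem_cons_of_mem _ hy)) e
            (by rw [hgr]; exact he2)
          exact ⟨u', h1, List.mem_cons_of_mem _ h2⟩

lemma extract_exists (G : Multigraph V E) (s t : V) [Fintype V] [Fintype E]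
    (hacycH : (G.broadcast s).Acyclic)
    (hw : (G.broadcast s).Walk (Sum.inl s) (Sum.inl t)) :
    ∃ w : G.Walk s t,
      (∀ e ∈ w.edges, Sum.inl e ∈ hw.edges) ∧
      (∀ v ∈ w.internals, ∃ u : {u : V // u ≠ s}, u.1 = v ∧ Sum.inr u ∈ hw.edges) := by
  classical
  obtain ⟨x, r, hxr⟩ := List.exists_cons_of_ne_nil hw.ne
  have hrevne : hw.edges.reverse ≠ [] := by simp [hw.ne]
  obtain ⟨y, ry, hyr⟩ := List.exists_cons_of_ne_nil hrevne
  have hxfirst : (G.broadcast s).tail x = Sum.inl s := hw.first' x (by rw [hxr]; rfl)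
  have hylast : (G.broadcast s).head y = Sum.inl t := by
    apply hw.last' y
    rw [List.getLast?_eq_head?_reverse, hyr]
    rfl
  obtain ⟨e₀, rfl, he₀s⟩ : ∃ e₀, x = Sum.inl e₀ ∧ G.tail e₀ = s := by
    cases x with
    | inl e₀ =>
      refine ⟨e₀, rfl, ?_⟩
      by_cases h : G.tail e₀ = s
      · exact h
      · exfalso
        have h2 : (G.broadcast s).tail (Sum.inl e₀) = Sum.inr ⟨G.tail e₀, h⟩ := by
          simp [broadcast, h]
        rw [h2] at hxfirst
        exact Sum.inr_ne_inl hxfirst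
    | inr u =>
      exfalso
      have h2 : (G.broadcast s).tail (Sum.inr u) = Sum.inl u.1 := rfl
      rw [h2] at hxfirst
      exact u.2 (Sum.inl.inj hxfirst)
  obtain ⟨e', rfl, he't⟩ : ∃ e', y = Sum.inl e' ∧ G.head e' = t := by
    cases y with
    | inl e' => exact ⟨e', rfl, Sum.inl.inj hylast⟩
    | inr u => exact absurd hylast (by simp [broadcast])
  set σl := hw.edges.filterMap (Sum.elim some (fun _ => none)) with hσl
  have hσlhead : σl.head? = some e₀ := by rw [hσl, hxr]; rfl
  have hσllast : σl.getLast? = some e' := by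
    rw [hσl, List.getLast?_eq_head?_reverse, ← List.filterMap_reverse, hyr]
    rfl
  have hne : σl ≠ [] := by
    intro h
    rw [h] at hσlhead
    exact Option.some_ne_none _ hσlhead.symm
  have h1 : ∀ z ∈ σl.head?, G.tail z = s := by
    intro z hz
    rw [hσlhead] at hz
    cases hz
    exact he₀s
  have h2 : ∀ z ∈ σl.getLast?, G.head z = t := by
    intro z hz
    rw [hσllast] at hz
    cases hz
    exact he't
  refine ⟨Walk.mk' σl hne h1 h2 (bchain G s hw.edges hw.chain), ?_, ?_⟩
  · intro e he
    simp only [Walk.mk'_edges, hσl] at he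
    obtain ⟨z, hz, hze⟩ := List.mem_filterMap.mp he
    cases z with
    | inl a =>
      simp only [Sum.elim_inl, Option.some_inj] at hze
      exact hze ▸ hz
    | inr u => simp at hze
  · intro v hv
    have hsimp := Walk.isSimple_of_acyclic hacycH hw
    have hnos : ∀ z ∈ hw.edges, (G.broadcast s).head z ≠ Sum.inl s := by
      intro z hz h
      exact (List.nodup_cons.mp hsimp).1 (List.mem_map.mpr ⟨z, hz, h⟩)
    simp only [Walk.internals, Walk.mk'_edges, Set.mem_setOf_eq] at hv
    obtain ⟨e, he, hev⟩ := hv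
    obtain ⟨u, hu1, hu2⟩ := binternals G s hw.edges hw.chain hnos e he
    exact ⟨u, hu1.trans hev, hu2⟩

lemma broadcast_int_disjoint (G : Multigraph V E) (s t : V) [Fintype V] [Fintype E]
    (hacycH : (G.broadcast s).Acyclic) (k : ℕ)
    (P : Fin k → (G.broadcast s).Walk (Sum.inl s) (Sum.inl t))
    (hdisj : ∀ i j, i ≠ j → (P i).edgeSet ∩ (P j).edgeSet = ∅) :
    G.HasIntDisjoint s t k := by
  choose Q hQe hQi using fun i => extract_exists G s t hacycH (P i)
  refine ⟨Q, fun i j hij => ⟨?_, ?_⟩⟩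
  · ext v
    simp only [Set.mem_inter_iff, Set.mem_empty_iff_false, iff_false, not_and]
    intro hvi hvj
    obtain ⟨u, hu1, hu2⟩ := hQi i v hvi
    obtain ⟨u', hu1', hu2'⟩ := hQi j v hvj
    have huu : u = u' := Subtype.ext (hu1.trans hu1'.symm)
    have := Set.eq_empty_iff_forall_notMem.mp (hdisj i j hij) (Sum.inr u)
    exact this ⟨hu2, huu ▸ hu2'⟩
  · ext e
    simp only [Set.mem_inter_iff, Set.mem_empty_iff_false, iff_false, not_and]
    intro hei hej
    have h1 := hQe i e hei
    have h2 := hQe j e hej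
    have := Set.eq_empty_iff_forall_notMem.mp (hdisj i j hij) (Sum.inl e)
    exact this ⟨h1, h2⟩

end Transfer

end Aux
end Multigraph

/-- For an acyclic network with sink set `T` in which every
non-source vertex has diversity exactly `d`, with no parallel edges except
possibly out of `s`, and some sink of in-degree exactly `d`, the multicast
capacity `min_{t ∈ T} K(s,t)` and the broadcast-transformed capacity
`min_{t ∈ T} λ(s,t)` both equal `d`. -/
theorem stmt14 {V E : Type} [Fintype V] [Fintype E] [DecidableEq V]
    (G : Multigraph V E) (s : V) (hacyc : G.Acyclic) (d : ℕ)
    (T : Finset V) (hT : T.Nonempty) (hTs : ∀ t ∈ T, t ≠ s)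
    (hdiv : ∀ v : V, v ≠ s → G.diversity s v = d)
    (hpar : ∀ e e' : E, G.tail e ≠ s → G.tail e = G.tail e' →
      G.head e = G.head e' → e = e')
    (t₀ : V) (ht₀ : t₀ ∈ T) (hdeg : G.indeg t₀ = d) :
    ((∀ t ∈ T, ∀ S : Finset V, s ∈ S → t ∉ S → d ≤ (G.cutE S).card) ∧
      (∃ t ∈ T, ∃ S : Finset V, s ∈ S ∧ t ∉ S ∧ (G.cutE S).card = d)) ∧
    ((∀ t ∈ T, G.HasIntDisjoint s t d) ∧
      (∃ t ∈ T, ∀ n, G.HasIntDisjoint s t n → n ≤ d)) := by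
  classical
  have hindeg : ∀ v : V, v ≠ s → G.indeg v = d :=
    fun v hv => Multigraph.indeg_eq G s d v hv (hdiv v hv) hpar
  have hwf := Multigraph.wf_edgeRel hacyc
  have part1 : ∀ t ∈ T, ∀ S : Finset V, s ∈ S → t ∉ S → d ≤ (G.cutE S).card := by
    intro t htT S hsS htS
    obtain ⟨v, hvW, hmin⟩ := hwf.has_min {v : V | v ∉ S} ⟨t, htS⟩
    have hvs : v ≠ s := fun h => hvW (h ▸ hsS)
    rw [← hindeg v hvs]
    apply Finset.card_le_card
    intro e he
    simp only [Multigraph.indeg, Finset.mem_filter, Finset.mem_univ, true_and] at he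
    simp only [Multigraph.cutE, Finset.mem_filter, Finset.mem_univ, true_and]
    refine ⟨?_, he ▸ hvW⟩
    by_contra hnot
    exact hmin (G.tail e) hnot ⟨e, rfl, he⟩
  have part2 : ∃ t ∈ T, ∃ S : Finset V, s ∈ S ∧ t ∉ S ∧ (G.cutE S).card = d := by
    refine ⟨t₀, ht₀, Finset.univ.erase t₀,
      Finset.mem_erase.mpr ⟨(hTs t₀ ht₀).symm, Finset.mem_univ s⟩, by simp, ?_⟩
    have hE : G.cutE (Finset.univ.erase t₀) = Finset.univ.filter (fun e => G.head e = t₀) := by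
      ext e
      constructor
      · intro h
        have h' := (Finset.mem_filter.mp h).2
        obtain ⟨h1, h2⟩ := h'
        have h3 : G.head e = t₀ := by
          by_contra hne
          exact h2 (Finset.mem_erase.mpr ⟨hne, Finset.mem_univ _⟩)
        exact Finset.mem_filter.mpr ⟨Finset.mem_univ _, h3⟩
      · intro h
        have h3 := (Finset.mem_filter.mp h).2
        refine Finset.mem_filter.mpr ⟨Finset.mem_univ _,
          Finset.mem_erase.mpr ⟨?_, Finset.mem_univ _⟩, ?_⟩
        · intro hte
          have hloop : G.head e = G.tail e := h3.trans hte.symm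
          exact (hacyc (G.tail e)).false (Multigraph.Walk.single e rfl hloop)
        · intro hmem
          exact (Finset.mem_erase.mp hmem).1 h3
    rw [hE]
    exact hdeg
  have part4 : ∀ n, G.HasIntDisjoint s t₀ n → n ≤ d := by
    rintro n ⟨P, hP⟩
    rw [← hdeg]
    have hmemf : ∀ i : Fin n, (P i).edges.getLast (P i).ne
        ∈ Finset.univ.filter (fun e => G.head e = t₀) := by
      intro i
      simp only [Finset.mem_filter, Finset.mem_univ, true_and]
      exact (P i).last
    have hle := Finset.card_le_card_of_injOn (s := (Finset.univ : Finset (Fin n)))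
      (fun i : Fin n => (P i).edges.getLast (P i).ne)
      (fun i _ => hmemf i)
      (by
        intro i _ j _ hij2
        by_contra hij
        have heq : (P i).edges.getLast (P i).ne = (P j).edges.getLast (P j).ne := hij2
        have h1 : (P i).edges.getLast (P i).ne ∈ (P i).edgeSet :=
          List.getLast_mem (P i).ne
        have h2 : (P i).edges.getLast (P i).ne ∈ (P j).edgeSet := by
          show (P i).edges.getLast (P i).ne ∈ (P j).edges
          rw [heq]
          exact List.getLast_mem (P j).ne
        have h3 := Set.eq_empty_iff_forall_notMem.mp ((hP i j hij).2)
          ((P i).edges.getLast (P i).ne)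
        exact h3 ⟨h1, h2⟩)
    simpa [Multigraph.indeg] using hle
  have part3 : ∀ t ∈ T, G.HasIntDisjoint s t d := by
    intro t htT
    have hts : t ≠ s := hTs t htT
    have hacycH := Multigraph.broadcast_acyclic G s hacyc
    have hab : (Sum.inl s : V ⊕ {u : V // u ≠ s}) ≠ Sum.inl t :=
      fun h => hts (Sum.inl.inj h).symm
    obtain ⟨P, hP⟩ := Multigraph.menger (G.broadcast s) hacycH (Sum.inl s) (Sum.inl t) hab d
      (fun S ha hb => Multigraph.broadcast_cut_bound G s t d hts hacyc hdiv hpar S ha hb)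
    exact Multigraph.broadcast_int_disjoint G s t hacycH d P hP
  exact ⟨⟨part1, part2⟩, part3, ⟨t₀, ht₀, part4⟩⟩
end
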